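/- arXiv:2507.09293 — 16 statements merged into one kernel-verified Lean document; each statement's English description precedes it below -/
import Mathlib

section
/- Let S be the complex vector space with basis {W_m | m ∈ ℤ} (realized as ℤ →₀ ℂ with W_m the basis vector at m), let φ : ℤ × ℤ → ℂ, and let ∘ be the ℂ-bilinear operation on S determined by W_m ∘ W_n = φ(m,n)·W_{m+n} for all m,n ∈ ℤ. Then (S, ∘) is an anti-pre-Lie algebraic structure on the Witt algebra (that is, ∘ satisfies the anti-pre-Lie identities x∘(y∘z) − y∘(x∘z) = [y,x]∘z and the Jacobi identity [[x,y],z] + [[y,z],x] + [[z,x],y] = 0 where [x,y] = x∘y − y∘x, and the commutator satisfies W_m∘W_n − W_n∘W_m = (n−m)·W_{m+n}) if and only if φ satisfies: (E1) φ(m,n) − φ(n,m) = n − m for all m,n ∈ ℤ, and (E2) (n−m)·φ(m+n,l) = φ(m,l)·φ(n,m+l) − φ(n,l)·φ(m,n+l) for all m,n,l ∈ ℤ. -/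
/-- The basis vector `W m` of the Witt algebra, realized in `ℤ →₀ ℂ`. -/
noncomputable def W (m : ℤ) : ℤ →₀ ℂ := Finsupp.single m 1

/-- The commutator bracket associated to a bilinear operation. -/
noncomputable def br (mul : (ℤ →₀ ℂ) →ₗ[ℂ] (ℤ →₀ ℂ) →ₗ[ℂ] (ℤ →₀ ℂ))
    (x y : ℤ →₀ ℂ) : ℤ →₀ ℂ := mul x y - mul y x

lemma smul_W_inj {k : ℤ} {c d : ℂ} (h : c • W k = d • W k) : c = d := by
  have := congrArg (fun f => f k) h
  simpa [W] using this

lemma single_eq_smul_W (a : ℤ) (b : ℂ) : (Finsupp.single a b : ℤ →₀ ℂ) = b • W a := by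
  rw [W, Finsupp.smul_single, smul_eq_mul, mul_one]

theorem stmt_0 (φ : ℤ × ℤ → ℂ)
    (mul : (ℤ →₀ ℂ) →ₗ[ℂ] (ℤ →₀ ℂ) →ₗ[ℂ] (ℤ →₀ ℂ))
    (hmul : ∀ m n : ℤ, mul (W m) (W n) = φ (m, n) • W (m + n)) :
    ((∀ x y z : ℤ →₀ ℂ,
        mul x (mul y z) - mul y (mul x z) = mul (br mul y x) z) ∧
     (∀ x y z : ℤ →₀ ℂ,
        br mul (br mul x y) z + br mul (br mul y z) x + br mul (br mul z x) y = 0) ∧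
     (∀ m n : ℤ,
        mul (W m) (W n) - mul (W n) (W m) = ((n : ℂ) - m) • W (m + n)))
    ↔
    ((∀ m n : ℤ, φ (m, n) - φ (n, m) = (n : ℂ) - m) ∧
     (∀ m n l : ℤ, ((n : ℂ) - m) * φ (m + n, l)
        = φ (m, l) * φ (n, m + l) - φ (n, l) * φ (m, n + l))) := by
  have hbrs : ∀ (c : ℂ) (x y : ℤ →₀ ℂ), br mul (c • x) y = c • br mul x y := by
    intro c x y; simp [br, smul_sub]
  have hbrs2 : ∀ (c : ℂ) (x y : ℤ →₀ ℂ), br mul x (c • y) = c • br mul x y := by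
    intro c x y; simp [br, smul_sub]
  have hbra1 : ∀ (f g y : ℤ →₀ ℂ), br mul (f + g) y = br mul f y + br mul g y := by
    intro f g y; simp only [br, map_add, LinearMap.add_apply]; abel
  have hbra2 : ∀ (f g y : ℤ →₀ ℂ), br mul y (f + g) = br mul y f + br mul y g := by
    intro f g y; simp only [br, map_add, LinearMap.add_apply]; abel
  constructor
  · rintro ⟨h1, _, h3⟩
    have hE1 : ∀ m n : ℤ, φ (m, n) - φ (n, m) = (n : ℂ) - m := by
      intro m n
      have := h3 m n
      rw [hmul, hmul, add_comm n m, ← sub_smul] at this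
      exact smul_W_inj this
    refine ⟨hE1, ?_⟩
    intro m n l
    have hb : br mul (W n) (W m) = ((m : ℂ) - n) • W (m + n) := by
      rw [br, hmul, hmul, add_comm m n, ← sub_smul, hE1]
    have key := h1 (W m) (W n) (W l)
    rw [hmul, hmul, map_smul, map_smul, hmul, hmul, hb, map_smul,
      LinearMap.smul_apply, hmul] at key
    rw [show n + (m + l) = m + (n + l) by ring, show m + n + l = m + (n + l) by ring,
      smul_smul, smul_smul, smul_smul, ← sub_smul] at key
    have := smul_W_inj key
    linear_combination this
  · rintro ⟨hE1, hE2⟩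
    have hbr : ∀ m n : ℤ, br mul (W m) (W n) = ((n : ℂ) - m) • W (m + n) := by
      intro m n
      rw [br, hmul, hmul, add_comm n m, ← sub_smul, hE1]
    have key1 : ∀ m n l : ℤ, mul (W m) (mul (W n) (W l)) - mul (W n) (mul (W m) (W l))
        = mul (br mul (W n) (W m)) (W l) := by
      intro m n l
      rw [hbr, add_comm n m, hmul, hmul, map_smul, map_smul, map_smul,
        LinearMap.smul_apply, hmul, hmul, hmul]
      rw [show n + (m + l) = m + (n + l) by ring, show m + n + l = m + (n + l) by ring,
        smul_smul, smul_smul, smul_smul, ← sub_smul]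
      congr 1
      linear_combination hE2 m n l
    have key2 : ∀ m n l : ℤ,
        br mul (br mul (W m) (W n)) (W l) + br mul (br mul (W n) (W l)) (W m)
          + br mul (br mul (W l) (W m)) (W n) = 0 := by
      intro m n l
      rw [hbr m n, hbrs, hbr, hbr n l, hbrs, hbr, hbr l m, hbrs, hbr]
      rw [show n + l + m = m + n + l by ring, show l + m + n = m + n + l by ring,
        smul_smul, smul_smul, smul_smul, ← add_smul, ← add_smul]
      convert zero_smul ℂ (W (m + n + l)) using 2
      push_cast
      ring
    refine ⟨?_, ?_, ?_⟩
    · intro x y z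
      induction x using Finsupp.induction_linear with
      | zero => simp [br]
      | add f g hf hg =>
        simp only [map_add, LinearMap.add_apply, hbra2, hbra1]
        linear_combination (norm := module) hf + hg
      | single a b =>
        induction y using Finsupp.induction_linear with
        | zero => simp [br]
        | add f g hf hg =>
          simp only [map_add, LinearMap.add_apply, hbra2, hbra1]
          linear_combination (norm := module) hf + hg
        | single a' b' =>
          induction z using Finsupp.induction_linear with
          | zero => simp
          | add f g hf hg =>
            simp only [map_add]
            linear_combination (norm := module) hf + hg
          | single a'' b'' =>
            rw [single_eq_smul_W, single_eq_smul_W, single_eq_smul_W]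
            simp only [map_smul, LinearMap.smul_apply, hbrs, hbrs2]
            linear_combination (norm := module) (b * b' * b'') • key1 a a' a''
    · intro x y z
      induction x using Finsupp.induction_linear with
      | zero => simp [br]
      | add f g hf hg =>
        simp only [hbra1, hbra2]
        linear_combination (norm := module) hf + hg
      | single a b =>
        induction y using Finsupp.induction_linear with
        | zero => simp [br]
        | add f g hf hg =>
          simp only [hbra1, hbra2]
          linear_combination (norm := module) hf + hg
        | single a' b' =>
          induction z using Finsupp.induction_linear with
          | zero => simp [br]
          | add f g hf hg =>
            simp only [hbra1, hbra2]
            linear_combination (norm := module) hf + hg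
          | single a'' b'' =>
            rw [single_eq_smul_W, single_eq_smul_W, single_eq_smul_W]
            simp only [hbrs, hbrs2]
            linear_combination (norm := module) (b * b' * b'') • key2 a a' a''
    · intro m n
      simpa [br] using hbr m n
end

section
/- Let V be the complex vector space (ℤ →₀ ℂ) × ℂ, with W_m := (the basis vector of ℤ →₀ ℂ at m, 0) for m ∈ ℤ and c := (0,1). There do not exist functions φ', φ : ℤ × ℤ → ℂ and a ℂ-bilinear operation ∘ on V satisfying W_n ∘ W_m = φ'(n,m)·W_{m+n} + δ_{m+n,0}·φ(n,m)·c and W_n ∘ c = c ∘ W_n = c ∘ c = 0 for all m,n ∈ ℤ, such that ∘ satisfies the anti-pre-Lie identities x∘(y∘z) − y∘(x∘z) = [y,x]∘z and [[x,y],z] + [[y,z],x] + [[z,x],y] = 0 (where [x,y] = x∘y − y∘x) and the commutator equals the Virasoro bracket, i.e., W_n∘W_m − W_m∘W_n = (m−n)·W_{m+n} + δ_{m+n,0}·((n³−n)/12)·c for all m,n ∈ ℤ. -/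
/-- The vector space underlying the Virasoro algebra: `(ℤ →₀ ℂ) × ℂ`. -/
abbrev Vir : Type := (ℤ →₀ ℂ) × ℂ

/-- The basis vector `W m` of the Virasoro algebra. -/
noncomputable def Wv (m : ℤ) : Vir := (Finsupp.single m 1, 0)

/-- The central element `c` of the Virasoro algebra. -/
noncomputable def cV : Vir := (0, 1)

/-- The commutator bracket associated to a bilinear operation on `Vir`. -/
noncomputable def brV (mul : Vir →ₗ[ℂ] Vir →ₗ[ℂ] Vir) (x y : Vir) : Vir :=
  mul x y - mul y x

noncomputable def coW (j : ℤ) : Vir →ₗ[ℂ] ℂ :=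
  (Finsupp.lapply j).comp (LinearMap.fst ℂ (ℤ →₀ ℂ) ℂ)
noncomputable def coC : Vir →ₗ[ℂ] ℂ := LinearMap.snd ℂ (ℤ →₀ ℂ) ℂ

lemma coW_Wv (j i : ℤ) : coW j (Wv i) = if i = j then 1 else 0 := by
  simp [coW, Wv, Finsupp.single_apply]
lemma coW_cV (j : ℤ) : coW j cV = 0 := by simp [coW, cV]
lemma coC_Wv (i : ℤ) : coC (Wv i) = 0 := by simp [coC, Wv]
lemma coC_cV : coC cV = 1 := by simp [coC, cV]


theorem stmt_1 :
    ¬ ∃ (φ' φ : ℤ × ℤ → ℂ) (mul : Vir →ₗ[ℂ] Vir →ₗ[ℂ] Vir),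
      (∀ n m : ℤ, mul (Wv n) (Wv m)
          = φ' (n, m) • Wv (m + n) + (if m + n = 0 then φ (n, m) else 0) • cV) ∧
      (∀ n : ℤ, mul (Wv n) cV = 0) ∧
      (∀ n : ℤ, mul cV (Wv n) = 0) ∧
      mul cV cV = 0 ∧
      (∀ x y z : Vir, mul x (mul y z) - mul y (mul x z) = mul (brV mul y x) z) ∧
      (∀ x y z : Vir,
        brV mul (brV mul x y) z + brV mul (brV mul y z) x + brV mul (brV mul z x) y = 0) ∧
      (∀ m n : ℤ, mul (Wv n) (Wv m) - mul (Wv m) (Wv n)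
          = ((m : ℂ) - n) • Wv (m + n)
            + (if m + n = 0 then (((n : ℂ) ^ 3 - n) / 12) else 0) • cV) := by
  rintro ⟨φ', φ, mul, h1, h2, h3, h4, h5, h6, h7⟩
  -- skew-symmetry: L1
  have L1 : ∀ n m : ℤ, φ' (n, m) - φ' (m, n) = (m : ℂ) - n := by
    intro n m
    have e := h7 m n
    rw [h1 n m, h1 m n] at e
    rw [show n + m = m + n from by ring] at e
    have eW := congrArg (coW (m + n)) e
    simp only [map_add, map_sub, map_smul, coW_Wv, coW_cV, smul_eq_mul, mul_zero, mul_one,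
      add_zero, zero_add, eq_self_iff_true, if_true, smul_zero] at eW
    linear_combination eW
  -- central skew: L2
  have L2 : ∀ n : ℤ, φ (n, -n) - φ (-n, n) = ((n : ℂ) ^ 3 - n) / 12 := by
    intro n
    have e := h7 (-n) n
    rw [h1 n (-n), h1 (-n) n] at e
    rw [show (-n) + n = (0:ℤ) from by ring, show n + (-n) = (0:ℤ) from by ring] at e
    have eC := congrArg coC e
    simp only [map_add, map_sub, map_smul, coC_Wv, coC_cV, smul_eq_mul, mul_zero, mul_one,
      add_zero, zero_add, eq_self_iff_true, if_true, smul_zero] at eC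
    linear_combination eC
  -- main identity extraction
  have mainV : ∀ n m k : ℤ,
      (φ' (m, k) * φ' (n, k + m) - φ' (n, k) * φ' (m, k + n) = ((n:ℂ) - m) * φ' (n + m, k))
      ∧ (k + m + n = 0 → φ' (m, k) * φ (n, k + m) - φ' (n, k) * φ (m, k + n)
          = ((n:ℂ) - m) * φ (n + m, k)) := by
    intro n m k
    have hbr : brV mul (Wv m) (Wv n)
        = ((n:ℂ) - m) • Wv (n + m)
          + (if n + m = 0 then ((m:ℂ) ^ 3 - m) / 12 else 0) • cV := h7 n m
    have e := h5 (Wv n) (Wv m) (Wv k)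
    rw [hbr, h1 m k, h1 n k] at e
    simp only [map_add, map_smul, LinearMap.add_apply, LinearMap.smul_apply, h2, h3,
      smul_zero, add_zero] at e
    rw [h1 n (k + m), h1 m (k + n), h1 (n + m) k] at e
    rw [show k + n + m = k + m + n from by ring, show k + (n + m) = k + m + n from by ring] at e
    constructor
    · have eW := congrArg (coW (k + m + n)) e
      simp only [map_add, map_sub, map_smul, coW_Wv, coW_cV, smul_eq_mul, mul_zero, mul_one,
        add_zero, zero_add, eq_self_iff_true, if_true, smul_zero] at eW
      linear_combination eW
    · intro hc
      have eC := congrArg coC e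
      simp only [map_add, map_sub, map_smul, coC_Wv, coC_cV, smul_eq_mul, mul_zero, mul_one,
        add_zero, zero_add, smul_zero, hc, eq_self_iff_true, if_true] at eC
      linear_combination eC
  -- abbreviations
  have hE1 : ∀ a k : ℤ, φ' (a, k) * (φ' (0, k) - φ' (0, k + a) - (a:ℂ)) = 0 := by
    intro a k
    have h := (mainV a 0 k).1
    simp only [add_zero, Int.cast_zero, sub_zero] at h
    linear_combination h
  have uq : ∀ s : ℤ, φ' (0, s) = φ' (s, 0) + (s:ℂ) := by
    intro s; have := L1 0 s; push_cast at this ⊢; linear_combination this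
  have hq' : ∀ m : ℤ, φ' (m, 0) = φ' (0, 0) - 2 * (m:ℂ) := by
    intro m
    rcases eq_or_ne m 0 with rfl | hm
    · push_cast; ring
    · by_contra hne
      have hmC : (m:ℂ) ≠ 0 := Int.cast_ne_zero.mpr hm
      have e2 : φ' (m, 0) * (φ' (0,0) - φ' (m,0) - 2*(m:ℂ)) = 0 := by
        have h := hE1 m 0
        rw [show (0:ℤ) + m = m from by ring] at h
        linear_combination h + φ' (m,0) * (uq m)
      have hf0 : φ' (m, 0) = 0 := by
        rcases mul_eq_zero.mp e2 with h | h
        · exact h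
        · exact absurd (by linear_combination -h) hne
      have hne2 : φ' (0,0) - 2*(m:ℂ) ≠ 0 := by
        intro h; exact hne (by rw [hf0]; linear_combination -h)
      have e3 : φ' (-m, m) * (2*(m:ℂ) - φ' (0,0)) = 0 := by
        have h := hE1 (-m) m
        rw [show m + (-m) = (0:ℤ) from by ring] at h
        push_cast at h
        linear_combination h - φ' (-m, m) * (uq m) - φ' (-m, m) * hf0
      have hA : φ' (-m, m) = 0 := by
        rcases mul_eq_zero.mp e3 with h | h
        · exact h
        · exact absurd (by linear_combination -h) hne2
      have hB : φ' (m, -m) = -2*(m:ℂ) := by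
        have := L1 m (-m); push_cast at this; linear_combination this + hA
      have hC : φ' (-m, 0) = φ' (0,0) + 2*(m:ℂ) := by
        have h := hE1 m (-m)
        rw [show (-m) + m = (0:ℤ) from by ring, hB] at h
        have h' : (-2*(m:ℂ)) * (φ' (-m,0) - φ' (0,0) - 2*(m:ℂ)) = 0 := by
          linear_combination (norm := (push_cast; ring1)) h - (-2*(m:ℂ)) * (uq (-m))
        rcases mul_eq_zero.mp h' with h'' | h''
        · exact absurd h'' (by simpa using hmC)
        · linear_combination h''
      have hD : φ' (2*m, -m) = 0 := by
        have h := hE1 (2*m) (-m)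
        rw [show (-m) + 2*m = m from by ring] at h
        push_cast at h
        have h' : φ' (2*m, -m) * (φ' (0,0) - 2*(m:ℂ)) = 0 := by
          linear_combination (norm := (push_cast; ring1)) h - φ' (2*m,-m) * (uq (-m))
            + φ' (2*m,-m) * (uq m) - φ' (2*m,-m) * hC + φ' (2*m,-m) * hf0
        rcases mul_eq_zero.mp h' with h'' | h''
        · exact h''
        · exact absurd h'' hne2
      have hEt : φ' (-m, 2*m) = 3*(m:ℂ) := by
        have := L1 (-m) (2*m); push_cast at this; linear_combination this + hD
      have hFq : φ' (2*m, 0) = -2*(m:ℂ) := by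
        have h := hE1 (-m) (2*m)
        rw [show 2*m + (-m) = m from by ring, hEt] at h
        push_cast at h
        have h' : (3*(m:ℂ)) * (φ' (2*m, 0) + 2*(m:ℂ)) = 0 := by
          linear_combination (norm := (push_cast; ring1)) h - 3*(m:ℂ)*(uq (2*m)) + 3*(m:ℂ)*(uq m) + 3*(m:ℂ)*hf0
        rcases mul_eq_zero.mp h' with h'' | h''
        · exact absurd h'' (by simp [hmC])
        · linear_combination h''
      have h := hE1 (2*m) 0
      rw [show (0:ℤ) + 2*m = 2*m from by ring, hFq] at h
      push_cast at h
      have h' : (-2*(m:ℂ)) * (φ' (0,0) - 2*(m:ℂ)) = 0 := by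
        linear_combination (norm := (push_cast; ring1)) h + (-2*(m:ℂ))*(uq (2*m)) + (-2*(m:ℂ))*hFq
      exact absurd h' (mul_ne_zero (by simpa using hmC) hne2)
  -- general values of φ'
  have hf : ∀ m n : ℤ, m ≠ n → φ' (m, n) = φ' (0,0) - 2*(m:ℂ) - n := by
    intro m n hmn
    have key := (mainV n m 0).1
    simp only [zero_add] at key
    rw [hq' m, hq' n, hq' (n + m)] at key
    have hsk := L1 n m
    have hc : (n:ℂ) - m ≠ 0 := by
      rw [sub_ne_zero]; exact_mod_cast hmn.symm
    have h2 : ((n:ℂ) - m) * (φ' (m,n) - (φ' (0,0) - 2*(m:ℂ) - n)) = 0 := by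
      push_cast at key hsk ⊢
      linear_combination key/2 - (φ' (0,0) - 2*(m:ℂ))/2 * hsk
    rcases mul_eq_zero.mp h2 with h | h
    · exact absurd h hc
    · linear_combination h
  -- cocycle antisymmetry values
  have hS1 := L2 1
  have hS2 := L2 2
  have hS3 := L2 3
  have hS4 := L2 4
  have hS5 := L2 5
  norm_num at hS1 hS2 hS3 hS4 hS5
  -- diagonal central equations
  have hD1 := (mainV (-1) 1 0).2 (by norm_num)
  have hD2 := (mainV (-2) 2 0).2 (by norm_num)
  have hD3 := (mainV (-3) 3 0).2 (by norm_num)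
  have hD4 := (mainV (-4) 4 0).2 (by norm_num)
  have hD5 := (mainV (-5) 5 0).2 (by norm_num)
  norm_num at hD1 hD2 hD3 hD4 hD5
  rw [hq' 1, hq' (-1)] at hD1
  rw [hq' 2, hq' (-2)] at hD2
  rw [hq' 3, hq' (-3)] at hD3
  rw [hq' 4, hq' (-4)] at hD4
  rw [hq' 5, hq' (-5)] at hD5
  push_cast at hD1 hD2 hD3 hD4 hD5
  -- solve for the diagonal cocycle values
  have hg1 : φ (1, -1) = φ (0,0) / 2 := by
    linear_combination (-1/4 : ℂ) * hD1 - (φ' (0,0) - 2)/4 * hS1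
  have hg2 : φ (2, -2) = φ (0,0) / 2 - (φ' (0,0) - 4)/16 := by
    linear_combination (-1/8 : ℂ) * hD2 - (φ' (0,0) - 4)/8 * hS2
  have hg3 : φ (3, -3) = φ (0,0) / 2 - (φ' (0,0) - 6)/6 := by
    linear_combination (-1/12 : ℂ) * hD3 - (φ' (0,0) - 6)/12 * hS3
  have hg4 : φ (4, -4) = φ (0,0) / 2 - 5*(φ' (0,0) - 8)/16 := by
    linear_combination (-1/16 : ℂ) * hD4 - (φ' (0,0) - 8)/16 * hS4
  have hg5 : φ (5, -5) = φ (0,0) / 2 - (φ' (0,0) - 10)/2 := by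
    linear_combination (-1/20 : ℂ) * hD5 - (φ' (0,0) - 10)/20 * hS5
  -- off-diagonal central equations
  have hF1 := (mainV 2 1 (-3)).2 (by norm_num)
  have hF2 := (mainV 3 1 (-4)).2 (by norm_num)
  have hF3 := (mainV 3 2 (-5)).2 (by norm_num)
  norm_num at hF1 hF2 hF3
  rw [hf 1 (-3) (by norm_num), hf 2 (-3) (by norm_num)] at hF1
  rw [hf 1 (-4) (by norm_num), hf 3 (-4) (by norm_num)] at hF2
  rw [hf 2 (-5) (by norm_num), hf 3 (-5) (by norm_num)] at hF3
  push_cast at hF1 hF2 hF3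
  rw [hg1, hg2, hg3] at hF1
  rw [hg1, hg3, hg4] at hF2
  rw [hg2, hg3, hg5] at hF3
  -- final contradiction
  have hI : φ' (0,0) ^ 2 - 14 * φ' (0,0) + 36 = 0 := by
    linear_combination (48 : ℂ) * hF1 - 24 * hF2
  have hII : φ' (0,0) ^ 2 - 16 * φ' (0,0) + 72 = 0 := by
    linear_combination (24 : ℂ) * hF1 - 24 * hF3
  have h18 : φ' (0,0) = 18 := by linear_combination (hI - hII)/2
  rw [h18] at hI
  norm_num at hI
end

section
/- Let φ : ℤ × ℤ → ℂ satisfy (E1) and (E2). If φ(0,0) is not an even integer (i.e., φ(0,0) ∉ 2ℤ), then φ(m,0) + 2m = φ(0,0) for all m ∈ ℤ. -/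
theorem stmt_2 (φ : ℤ × ℤ → ℂ)
    (hE1 : ∀ m n : ℤ, φ (m, n) - φ (n, m) = (n : ℂ) - m)
    (hE2 : ∀ m n l : ℤ, ((n : ℂ) - m) * φ (m + n, l)
        = φ (m, l) * φ (n, m + l) - φ (n, l) * φ (m, n + l))
    (h0 : ¬ ∃ N : ℤ, φ (0, 0) = 2 * N) :
    ∀ m : ℤ, φ (m, 0) + 2 * m = φ (0, 0) := by
  push_neg at h0
  -- relation R : φ(k,l) * (φ(0,k+l) - φ(0,l) + k) = 0, from E2 with middle slot 0
  have R : ∀ k l : ℤ, φ (k, l) * (φ (0, k + l) - φ (0, l) + (k : ℂ)) = 0 := by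
    intro k l
    have h2 := hE2 k 0 l
    simp only [add_zero, zero_add] at h2
    push_cast at h2
    linear_combination -h2
  -- dichotomy : φ(a,0) * (φ(a,0) - φ(0,0) + 2a) = 0
  have key : ∀ a : ℤ, φ (a, 0) * (φ (a, 0) - φ (0, 0) + 2 * (a : ℂ)) = 0 := by
    intro a
    have h2 := hE2 a 0 0
    simp only [add_zero, zero_add] at h2
    have h1 := hE1 a 0
    push_cast at h1 h2
    linear_combination -h2 + φ (a, 0) * h1
  -- main : if φ(a,0)=0 and a ≠ 0 then φ(0,0) = -a
  have main : ∀ a : ℤ, a ≠ 0 → φ (a, 0) = 0 → φ (0, 0) = -(a : ℂ) := by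
    intro a ha hfa
    have haC : (a : ℂ) ≠ 0 := Int.cast_ne_zero.mpr ha
    have h0a : φ (0, a) = (a : ℂ) := by
      have h1 := hE1 a 0
      rw [hfa] at h1
      push_cast at h1
      linear_combination -h1
    -- φ(-a, a) = 0
    have hneg : φ (-a, a) = 0 := by
      have hR := R (-a) a
      simp only [neg_add_cancel] at hR
      rw [h0a] at hR
      push_cast at hR
      rcases mul_eq_zero.mp hR with h | h
      · exact h
      · exfalso
        apply h0 a
        linear_combination h
    -- φ(a, -a) = -2a
    have hmm : φ (a, -a) = -2 * (a : ℂ) := by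
      have h1 := hE1 a (-a)
      rw [hneg] at h1
      push_cast at h1
      linear_combination h1
    -- φ(0, -a) = φ(0,0) + a
    have h0na : φ (0, -a) = φ (0, 0) + (a : ℂ) := by
      have hR := R a (-a)
      simp only [add_neg_cancel] at hR
      rw [hmm] at hR
      rcases mul_eq_zero.mp hR with h | h
      · exfalso
        have : (a : ℂ) = 0 := by linear_combination -h / 2
        exact haC this
      · linear_combination -h
    -- φ(-a, 0) = φ(0,0) + 2a
    have hna : φ (-a, 0) = φ (0, 0) + 2 * (a : ℂ) := by
      have h1 := hE1 (-a) 0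
      rw [h0na] at h1
      push_cast at h1
      linear_combination h1
    -- E2 (a, -a, 0) gives -2a·c = 2a(c+2a)
    have h2 := hE2 a (-a) 0
    simp only [add_neg_cancel, add_zero] at h2
    rw [hfa, hneg, hna, hmm] at h2
    push_cast at h2
    -- h2 : (-a - a) * φ(0,0) = 0 * 0 - (φ(0,0)+2a) * (-2a)
    have : (a : ℂ) * (φ (0, 0) + (a : ℂ)) = 0 := by linear_combination -h2 / 4
    rcases mul_eq_zero.mp this with h | h
    · exact absurd h haC
    · linear_combination h
  -- now the main argument
  intro m
  by_contra hne
  -- φ(m,0) = 0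
  have hfm : φ (m, 0) = 0 := by
    rcases mul_eq_zero.mp (key m) with h | h
    · exact h
    · exfalso; exact hne (by linear_combination h)
  have hm0 : m ≠ 0 := by
    rintro rfl
    exact hne (by push_cast; ring)
  have hc : φ (0, 0) = -(m : ℂ) := main m hm0 hfm
  -- m is odd : for any k, m ≠ 2k
  have hodd : ∀ k : ℤ, m ≠ -2 * k := by
    intro k hk
    apply h0 k
    rw [hc, hk]
    push_cast
    ring
  -- φ(2,0) = φ(0,0) - 4
  have hf2 : φ (2, 0) = φ (0, 0) - 4 := by
    rcases mul_eq_zero.mp (key 2) with h | h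
    · exfalso
      have := main 2 (by norm_num) h
      rw [hc] at this
      have hm : (m : ℂ) = ((2 : ℤ) : ℂ) := by push_cast; linear_combination -this
      have : m = 2 := Int.cast_injective hm
      exact hodd (-1) (by omega)
    · push_cast at h ⊢
      linear_combination h
  -- φ(m-2,0) = φ(0,0) - 2(m-2)
  have hfm2 : φ (m - 2, 0) = φ (0, 0) - 2 * ((m : ℂ) - 2) := by
    rcases mul_eq_zero.mp (key (m - 2)) with h | h
    · exfalso
      have hm2ne : m - 2 ≠ 0 := by
        rintro h'
        exact hodd (-1) (by omega)
      have := main (m - 2) hm2ne h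
      rw [hc] at this
      push_cast at this
      -- -m = -(m - 2) impossible
      have : (2 : ℂ) = 0 := by linear_combination -this
      norm_num at this
    · push_cast at h ⊢
      linear_combination h
  -- φ(0,m) = m and φ(0,2) = φ(0,0) - 2
  have h0m : φ (0, m) = (m : ℂ) := by
    have h1 := hE1 m 0
    rw [hfm] at h1
    push_cast at h1
    linear_combination -h1
  have h02 : φ (0, 2) = φ (0, 0) - 2 := by
    have h1 := hE1 2 0
    rw [hf2] at h1
    push_cast at h1
    linear_combination -h1
  -- R(m-2, 2) : φ(m-2,2) * 3m = 0 so φ(m-2,2) = 0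
  have hz : φ (m - 2, 2) = 0 := by
    have hR := R (m - 2) 2
    have : m - 2 + 2 = m := by ring
    rw [this, h0m, h02, hc] at hR
    push_cast at hR
    rcases mul_eq_zero.mp hR with h | h
    · exact h
    · exfalso
      have hm : (m : ℂ) = 0 := by linear_combination h / 3
      exact hm0 (by exact_mod_cast hm)
  -- E2 (m-2, 2, 0) : (4-m)·φ(m,0) = φ(m-2,0)·φ(2,m-2) - φ(2,0)·φ(m-2,2)
  have h2 := hE2 (m - 2) 2 0
  have e1 : m - 2 + 2 = m := by ring
  rw [e1] at h2
  simp only [add_zero] at h2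
  rw [hfm, hz, hfm2, hc] at h2
  push_cast at h2
  -- h2 : (2 - (m-2)) * 0 = (-m - 2*(m-2)) * φ(2, m-2) - φ(2,0) * 0
  have h4 : ((4 : ℂ) - 3 * m) * φ (2, m - 2) = 0 := by linear_combination -h2
  have h43 : (4 : ℂ) - 3 * m ≠ 0 := by
    intro h
    have : (3 * m : ℤ) = 4 := by
      have : ((3 * m : ℤ) : ℂ) = ((4 : ℤ) : ℂ) := by push_cast; linear_combination -h
      exact_mod_cast this
    omega
  have hz2 : φ (2, m - 2) = 0 := by
    rcases mul_eq_zero.mp h4 with h | h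
    · exact absurd h h43
    · exact h
  -- E1 (m-2, 2) : 0 - 0 = 2 - (m - 2), so m = 4, contradicting oddness
  have h1 := hE1 (m - 2) 2
  rw [hz, hz2] at h1
  push_cast at h1
  have hm4 : (m : ℂ) = ((4 : ℤ) : ℂ) := by push_cast; linear_combination h1
  have : m = 4 := Int.cast_injective hm4
  exact hodd (-2) (by omega)
end

section
/- Let φ : ℤ × ℤ → ℂ satisfy (E1) and (E2). If φ(0,0) = 2N for some integer N ∈ ℤ, then φ(m,0) + 2m = φ(0,0) for all m ∈ ℤ. -/
theorem stmt_3 (φ : ℤ × ℤ → ℂ)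
    (hE1 : ∀ m n : ℤ, φ (m, n) - φ (n, m) = (n : ℂ) - m)
    (hE2 : ∀ m n l : ℤ, ((n : ℂ) - m) * φ (m + n, l)
        = φ (m, l) * φ (n, m + l) - φ (n, l) * φ (m, n + l))
    (N : ℤ) (h0 : φ (0, 0) = 2 * N) :
    ∀ m : ℤ, φ (m, 0) + 2 * m = φ (0, 0) := by
  have key : ∀ n l : ℤ, φ (n, l) * (φ (l, 0) - φ (n + l, 0) - 2 * (n : ℂ)) = 0 := by
    intro n l
    have h2 := hE2 0 n l
    simp only [zero_add] at h2
    have e1 := hE1 0 l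
    have e2 := hE1 0 (n + l)
    push_cast at h2 e1 e2
    linear_combination (-1 : ℂ) * h2 - φ (n, l) * e1 + φ (n, l) * e2
  intro m
  by_cases hm : φ (m, 0) = 0
  · by_cases hm0 : m = 0
    · subst hm0; rw [hm]; ring
    · have e0m : φ (0, m) = (m : ℂ) := by
        have := hE1 0 m; push_cast at this; linear_combination this + hm
      have h2 := hE2 m (-m) m
      simp only [add_neg_cancel, neg_add_cancel] at h2
      rw [e0m, hm] at h2
      push_cast at h2
      -- h2 : (-(m:ℂ) - m) * m = φ (m, m) * φ (-m, m + m) - φ (-m, m) * 0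
      have hmC : (m : ℂ) ≠ 0 := Int.cast_ne_zero.mpr hm0
      have hmm : φ (m, m) ≠ 0 := by
        intro h
        rw [h] at h2
        apply hmC
        have : (-(m:ℂ) - m) * m = 0 := by rw [h2]; ring
        rcases mul_eq_zero.mp this with h' | h'
        · have : (m : ℂ) = 0 := by linear_combination (-1/2 : ℂ) * h'
          exact this
        · exact h'
      have h3 := key m m
      have h4 : φ (m + m, 0) = -2 * m := by
        rcases mul_eq_zero.mp h3 with h' | h'
        · exact absurd h' hmm
        · linear_combination hm - h'
      have h2m : φ (m + m, 0) ≠ 0 := by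
        rw [h4]; intro h
        apply hmC
        linear_combination (-1/2 : ℂ) * h
      have h5 := key (m + m) 0
      simp only [add_zero] at h5
      rcases mul_eq_zero.mp h5 with h' | h'
      · exact absurd h' h2m
      · push_cast at h'
        rw [h4] at h'
        rw [hm]
        linear_combination (-1 : ℂ) * h'
  · have h := key m 0
    simp only [add_zero] at h
    rcases mul_eq_zero.mp h with h' | h'
    · exact absurd h' hm
    · linear_combination (-1 : ℂ) * h'
end

section
/- Let φ : ℤ × ℤ → ℂ satisfy (E1) and (E2). Then φ(m,0) + 2m = φ(0,0) for all m ∈ ℤ. -/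
theorem stmt_4 (φ : ℤ × ℤ → ℂ)
    (hE1 : ∀ m n : ℤ, φ (m, n) - φ (n, m) = (n : ℂ) - m)
    (hE2 : ∀ m n l : ℤ, ((n : ℂ) - m) * φ (m + n, l)
        = φ (m, l) * φ (n, m + l) - φ (n, l) * φ (m, n + l)) :
    ∀ m : ℤ, φ (m, 0) + 2 * m = φ (0, 0) := by
  have hK : ∀ n l : ℤ, φ (n, l) * (φ (0, l) - φ (0, n + l) - n) = 0 := by
    intro n l
    have h := hE2 0 n l
    simp only [zero_add] at h
    push_cast at h
    linear_combination -h
  have hBad : ∀ k : ℤ, φ (0, k) ≠ φ (0, 0) - k → φ (0, k) = k := by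
    intro k hk
    have h := hK k 0
    rw [add_zero] at h
    rcases mul_eq_zero.mp h with h1 | h2
    · have e := hE1 0 k
      rw [h1] at e
      push_cast at e
      linear_combination e
    · exfalso; apply hk; linear_combination -h2
  intro m
  by_contra hcon
  have hbadm : φ (0, m) ≠ φ (0, 0) - m := by
    intro h
    apply hcon
    have e := hE1 m 0
    push_cast at e
    linear_combination e + h
  have gk : φ (0, m) = m := hBad m hbadm
  have h2k : φ (0, 0) ≠ 2 * (m : ℂ) := by
    intro h
    apply hbadm
    rw [gk, h]; ring
  have hStep : ∀ j : ℤ, j ≠ 0 → 2 * j ≠ m → φ (0, j) ≠ φ (0, 0) - j := by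
    intro j hj0 hj2 hgood
    have h1 := hK (m - j) j
    rw [sub_add_cancel] at h1
    have hφ1 : φ (m - j, j) = 0 := by
      rcases mul_eq_zero.mp h1 with h | h
      · exact h
      · exfalso; apply h2k
        push_cast at h
        linear_combination h - hgood + gk
    have e1 := hE1 j (m - j)
    rw [hφ1, sub_zero] at e1
    have hne : φ (j, m - j) ≠ 0 := by
      rw [e1]
      intro h
      apply hj2
      have h' : (2 * j : ℂ) = (m : ℂ) := by push_cast at h ⊢; linear_combination -h
      exact_mod_cast h'
    have h2 := hK j (m - j)
    rw [add_sub_cancel] at h2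
    rcases mul_eq_zero.mp h2 with h | h
    · exact hne h
    · have hval : φ (0, m - j) = (m : ℂ) + j := by
        linear_combination h + gk
      by_cases hb : φ (0, m - j) = φ (0, 0) - ((m - j : ℤ) : ℂ)
      · apply h2k
        push_cast at hb
        linear_combination hval - hb
      · have hb2 := hBad (m - j) hb
        apply hj0
        have h' : (j : ℂ) = 0 := by
          push_cast at hb2
          linear_combination (hb2 - hval) / 2
        exact_mod_cast h'
  have h1 : (0:ℤ) ≤ |m| := abs_nonneg m
  have h2 : m ≤ |m| := le_abs_self m
  set N : ℤ := |m| + 1 with hN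
  have hN0 : N ≠ 0 := by omega
  have hN2 : 2 * N ≠ m := by omega
  have hN10 : N + 1 ≠ 0 := by omega
  have hN12 : 2 * (N + 1) ≠ m := by omega
  have hN20 : 2 * N + 1 ≠ 0 := by omega
  have hN22 : 2 * (2 * N + 1) ≠ m := by omega
  have gN : φ (0, N) = (N : ℂ) := hBad N (hStep N hN0 hN2)
  have gN1 : φ (0, N + 1) = ((N + 1 : ℤ) : ℂ) := hBad _ (hStep _ hN10 hN12)
  have gN2 : φ (0, 2 * N + 1) = ((2 * N + 1 : ℤ) : ℂ) := hBad _ (hStep _ hN20 hN22)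
  have hrw : N + (N + 1) = 2 * N + 1 := by ring
  have k1 := hK N (N + 1)
  rw [hrw, gN1, gN2] at k1
  have f1 : φ (N, N + 1) = 0 := by
    rcases mul_eq_zero.mp k1 with h | h
    · exact h
    · exfalso; apply hN0
      have h' : (N : ℂ) = 0 := by push_cast at h; linear_combination -h / 2
      exact_mod_cast h'
  have hrw2 : N + 1 + N = 2 * N + 1 := by ring
  have k2 := hK (N + 1) N
  rw [hrw2, gN, gN2] at k2
  have f2 : φ (N + 1, N) = 0 := by
    rcases mul_eq_zero.mp k2 with h | h
    · exact h
    · exfalso; apply hN10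
      have h' : ((N : ℂ) + 1) = 0 := by push_cast at h; linear_combination -h / 2
      have h'' : ((N + 1 : ℤ) : ℂ) = 0 := by push_cast; linear_combination h'
      exact_mod_cast h''
  have e := hE1 N (N + 1)
  rw [f1, f2] at e
  have : (0 : ℂ) = 1 := by push_cast at e; linear_combination e
  norm_num at this
end

section
/- Let φ : ℤ × ℤ → ℂ satisfy (E1) and (E2). Then φ(0,n) = φ(0,0) − n for all n ∈ ℤ. (Equivalently, in the associated representation given by negative left multiplication, −W_0 ∘ W_n = (n − φ(0,0))·W_n, so each W_n spans a one-dimensional weight space.) -/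
theorem stmt_5 (φ : ℤ × ℤ → ℂ)
    (hE1 : ∀ m n : ℤ, φ (m, n) - φ (n, m) = (n : ℂ) - m)
    (hE2 : ∀ m n l : ℤ, ((n : ℂ) - m) * φ (m + n, l)
        = φ (m, l) * φ (n, m + l) - φ (n, l) * φ (m, n + l)) :
    ∀ n : ℤ, φ (0, n) = φ (0, 0) - n := by
  have star : ∀ a l : ℤ, φ (a, l) * ((a : ℂ) - φ (0, l) + φ (0, a + l)) = 0 := by
    intro a l
    have h := hE2 0 a l
    simp only [zero_add, add_zero] at h
    push_cast at h ⊢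
    linear_combination h
  intro n
  by_contra hne
  have hn0 : (n : ℂ) ≠ 0 := by
    intro h
    have hn : n = 0 := by exact_mod_cast h
    subst hn
    simp at hne
  -- step 1 : φ(n,0) = 0
  have h1 : φ (n, 0) = 0 := by
    have hs := star n 0
    simp only [add_zero] at hs
    rcases mul_eq_zero.mp hs with h | h
    · exact h
    · exfalso; apply hne; linear_combination h
  -- step 2 : φ(0,n) = n
  have h2 : φ (0, n) = (n : ℂ) := by
    have := hE1 0 n
    push_cast at this
    linear_combination this + h1
  -- step 3 : φ(0,0) ≠ 2n
  have h3 : φ (0, 0) ≠ 2 * (n : ℂ) := by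
    intro h; apply hne; rw [h, h2]; ring
  -- step 4 : φ(-n, n) = 0
  have h4 : φ (-n, n) = 0 := by
    have hs := star (-n) n
    simp only [neg_add_cancel] at hs
    rcases mul_eq_zero.mp hs with h | h
    · exact h
    · exfalso; apply h3; push_cast at h; linear_combination h + h2
  -- step 5 : φ(n,-n) = -2n
  have h5 : φ (n, -n) = -2 * (n : ℂ) := by
    have := hE1 n (-n)
    push_cast at this
    linear_combination this + h4
  -- step 6
  have h6 : φ (n, n) * φ (-n, n + n) = -2 * (n : ℂ) ^ 2 := by
    have h := hE2 n (-n) n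
    simp only [add_neg_cancel, neg_add_cancel] at h
    push_cast at h
    linear_combination -h - 2 * (n : ℂ) * h2 + φ (n, 0) * h4
  have h7a : φ (n, n) ≠ 0 := by
    intro h; rw [h, zero_mul] at h6
    have hsq : (n : ℂ) ^ 2 = 0 := by linear_combination h6 / 2
    exact hn0 (sq_eq_zero_iff.mp hsq)
  have h7b : φ (-n, n + n) ≠ 0 := by
    intro h; rw [h, mul_zero] at h6
    have hsq : (n : ℂ) ^ 2 = 0 := by linear_combination h6 / 2
    exact hn0 (sq_eq_zero_iff.mp hsq)
  -- step 8 : φ(0, n+n) = 0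
  have h8 : φ (0, n + n) = 0 := by
    have hs := star n n
    rcases mul_eq_zero.mp hs with h | h
    · exact absurd h h7a
    · linear_combination h + h2
  -- step 9 : φ(0,-n) = n + φ(0,0)
  have h9 : φ (0, -n) = (n : ℂ) + φ (0, 0) := by
    have hs := star n (-n)
    simp only [add_neg_cancel] at hs
    rcases mul_eq_zero.mp hs with h | h
    · rw [h5] at h; exact absurd h (by intro hh; apply hn0; linear_combination -hh/2)
    · linear_combination -h
  -- step 10 : φ(n+n, -n) = 0
  have h10 : φ (n + n, -n) = 0 := by
    have hs := star (n + n) (-n)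
    simp only [add_neg_cancel_right] at hs
    rcases mul_eq_zero.mp hs with h | h
    · exact h
    · exfalso; apply h3; push_cast at h; linear_combination -h - h9 + h2
  -- step 11 : φ(n+n, 0) = 0
  have h11 : φ (n + n, 0) = 0 := by
    have h := hE2 (n + n) (-n) 0
    simp only [add_neg_cancel_right, add_zero, neg_add_cancel] at h
    push_cast at h
    rw [h1, h10] at h
    have : φ (n + n, 0) * φ (-n, n + n) = 0 := by linear_combination -h
    rcases mul_eq_zero.mp this with hh | hh
    · exact hh
    · exact absurd hh h7b
  -- step 12 : contradiction
  have h12 := hE1 0 (n + n)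
  rw [h8, h11] at h12
  push_cast at h12
  apply hn0
  linear_combination -h12 / 2
end

section
/- Let φ : ℤ × ℤ → ℂ satisfy (E1) and (E2), and suppose φ(0,0) is not an even integer. If m, n ∈ ℤ satisfy m ≠ n, φ(m,0) + 2m = φ(0,0), and φ(n,0) + 2n = φ(0,0), then φ(m+n,0) + 2(m+n) = φ(0,0). -/
theorem stmt_6 (φ : ℤ × ℤ → ℂ)
    (hE1 : ∀ m n : ℤ, φ (m, n) - φ (n, m) = (n : ℂ) - m)
    (hE2 : ∀ m n l : ℤ, ((n : ℂ) - m) * φ (m + n, l)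
        = φ (m, l) * φ (n, m + l) - φ (n, l) * φ (m, n + l))
    (h0 : ¬ ∃ N : ℤ, φ (0, 0) = 2 * N)
    (m n : ℤ) (hmn : m ≠ n)
    (hm : φ (m, 0) + 2 * m = φ (0, 0))
    (hn : φ (n, 0) + 2 * n = φ (0, 0)) :
    φ (m + n, 0) + 2 * ((m : ℂ) + n) = φ (0, 0) := by
  have key : ∀ a b : ℤ, φ (a, b) * (φ (0, a + b) - φ (0, b) + a) = 0 := by
    intro a b
    have h := hE2 a 0 b
    simp only [add_zero, zero_add, Int.cast_zero] at h
    linear_combination -h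
  have hgm : φ (0, m) = φ (0, 0) - m := by
    have h := hE1 m 0
    push_cast at h
    linear_combination -h + hm
  have hgn : φ (0, n) = φ (0, 0) - n := by
    have h := hE1 n 0
    push_cast at h
    linear_combination -h + hn
  have hne : φ (m, n) ≠ φ (n, m) := by
    intro h
    have h1 := hE1 m n
    rw [h, sub_self] at h1
    have : (m : ℂ) = n := by linear_combination h1
    exact hmn (by exact_mod_cast this)
  have hfin : φ (0, m + n) = φ (0, 0) - m - n := by
    rcases ne_or_eq (φ (m, n)) 0 with h1 | h1
    · have k := key m n
      rcases mul_eq_zero.mp k with h | h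
      · exact absurd h h1
      · rw [hgn] at h; linear_combination h
    · have h2 : φ (n, m) ≠ 0 := fun h => hne (by rw [h1, h])
      have k := key n m
      rcases mul_eq_zero.mp k with h | h
      · exact absurd h h2
      · rw [hgm, add_comm n m] at h; linear_combination h
  have h := hE1 (m + n) 0
  push_cast at h
  linear_combination h + hfin
end

section
/- Let φ : ℤ × ℤ → ℂ satisfy (E1) and (E2), and suppose φ(0,0) is not an even integer. Then φ(1,0) + 2 = φ(0,0). -/
theorem stmt_7 (φ : ℤ × ℤ → ℂ)
    (hE1 : ∀ m n : ℤ, φ (m, n) - φ (n, m) = (n : ℂ) - m)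
    (hE2 : ∀ m n l : ℤ, ((n : ℂ) - m) * φ (m + n, l)
        = φ (m, l) * φ (n, m + l) - φ (n, l) * φ (m, n + l))
    (h0 : ¬ ∃ N : ℤ, φ (0, 0) = 2 * N) :
    φ (1, 0) + 2 = φ (0, 0) := by
  have hc0 : φ (0, 0) ≠ 0 := by
    intro h; exact h0 ⟨0, by rw [h]; norm_num⟩
  have hc2 : φ (0, 0) ≠ 2 := by
    intro h; exact h0 ⟨1, by rw [h]; norm_num⟩
  have e10 := hE1 1 0
  have r10 := hE2 0 1 0
  norm_num [-Prod.mk_zero_zero] at e10 r10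
  have key : φ (1, 0) * (φ (1, 0) + 2 - φ (0, 0)) = 0 := by
    linear_combination r10 + φ (1, 0) * e10
  rcases mul_eq_zero.mp key with h10 | hfac
  swap
  · linear_combination hfac
  exfalso
  set c := φ (0, 0) with hc
  have f1 : φ (0, 1) = 1 := by linear_combination h10 - e10
  have a2 := hE2 1 (-1) 1
  have r11 := hE2 0 1 1
  have r20 := hE2 0 2 0
  have a3 := hE2 1 (-1) 0
  have rm10 := hE2 0 (-1) 0
  have em10 := hE1 (-1) 0
  have a5 := hE2 1 (-1) (-1)
  have a6 := hE2 1 (-2) 0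
  have rm20 := hE2 0 (-2) 0
  have em20 := hE1 (-2) 0
  have a8 := hE2 2 (-2) 0
  have a9 := hE2 2 (-1) 0
  have e2m1 := hE1 2 (-1)
  have a10 := hE2 2 (-1) (-1)
  have rm21 := hE2 0 (-2) 1
  have a13 := hE2 1 (-2) 1
  have e1m1 := hE1 1 (-1)
  have e2m2 := hE1 2 (-2)
  norm_num [-Prod.mk_zero_zero] at a2 r11 r20 a3 rm10 em10 a5 a6 rm20 em20 a8 a9 e2m1 a10 rm21 a13 e1m1 e2m2
  -- φ(1,1)·φ(-1,2) = -2
  have huv : φ (1 : ℤ × ℤ) * φ (-1, 2) = -2 := by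
    linear_combination -a2 + φ (-1, 1) * h10 - 2 * f1
  have hu : φ (1 : ℤ × ℤ) ≠ 0 :=
    left_ne_zero_of_mul (a := φ (1 : ℤ × ℤ)) (by rw [huv]; norm_num)
  -- φ(0,2) = 0
  have f2 : φ (0, 2) = 0 := by
    have h : φ (1 : ℤ × ℤ) * φ (0, 2) = 0 := by
      linear_combination r11 + φ (1 : ℤ × ℤ) * f1
    exact (mul_eq_zero.mp h).resolve_left hu
  -- φ(2,0) = 0
  have h20 : φ (2, 0) = 0 := by
    have h : φ (2, 0) * (2 - c) = 0 := by
      linear_combination r20 - φ (2, 0) * f2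
    exact (mul_eq_zero.mp h).resolve_right (sub_ne_zero_of_ne (Ne.symm hc2))
  -- φ(-1,0)·φ(1,-1) = 2c
  have hpa : φ (-1, 0) * φ (1, -1) = 2 * c := by
    linear_combination a3 + φ (-1, 1) * h10
  have hp : φ (-1, 0) ≠ 0 :=
    left_ne_zero_of_mul (a := φ ((-1:ℤ),(0:ℤ))) (by rw [hpa]; exact mul_ne_zero two_ne_zero hc0)
  -- φ(0,-1) = c+1
  have fm1 : φ (0, -1) = c + 1 := by
    have h : φ (-1, 0) * (φ (0, -1) - (c + 1)) = 0 := by linear_combination rm10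
    have := (mul_eq_zero.mp h).resolve_left hp
    linear_combination this
  -- φ(-1,0) = c+2
  have hpval : φ (-1, 0) = c + 2 := by linear_combination em10 + fm1
  have hcp2 : c + 2 ≠ 0 := hpval ▸ hp
  have ha : φ (1, -1) * (c + 2) = 2 * c := by
    linear_combination hpa - φ (1, -1) * hpval
  -- φ(-1,-1)·φ(1,-2) = 4c+2
  have hvw : φ (-1, -1) * φ (1, -2) = 4 * c + 2 := by
    linear_combination a5 + hpa + 2 * fm1
  -- φ(-2,0)·φ(1,-2) = 3c+6
  have hqw : φ (-2, 0) * φ (1, -2) = 3 * c + 6 := by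
    linear_combination a6 + φ (-2, 1) * h10 + 3 * hpval
  have hq : φ (-2, 0) ≠ 0 :=
    left_ne_zero_of_mul (a := φ ((-2:ℤ),(0:ℤ)))
      (by rw [hqw]; intro h; exact hcp2 (by linear_combination h / 3))
  -- φ(0,-2) = c+2
  have fm2 : φ (0, -2) = c + 2 := by
    have h : φ (-2, 0) * (φ (0, -2) - (c + 2)) = 0 := by linear_combination rm20
    have := (mul_eq_zero.mp h).resolve_left hq
    linear_combination this
  -- φ(-2,0) = c+4
  have hqval : φ (-2, 0) = c + 4 := by linear_combination em20 + fm2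
  have hw : φ (1, -2) * (c + 4) = 3 * c + 6 := by
    linear_combination hqw - φ (1, -2) * hqval
  have hb : φ (2, -2) * (c + 4) = 4 * c := by
    linear_combination a8 + φ (-2, 2) * h20 - φ (2, -2) * hqval
  -- φ(2,-1) = 0
  have h2m1 : φ (2, -1) = 0 := by
    have h : φ (-1, 0) * φ (2, -1) = 0 := by
      linear_combination a9 + 3 * h10 + φ (-1, 2) * h20
    exact (mul_eq_zero.mp h).resolve_left hp
  have hm12 : φ (-1, 2) = 3 := by linear_combination -e2m1 + h2m1
  rw [hm12] at huv
  -- φ(-1,-1)·φ(2,-2) = 3·φ(1,-1)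
  have hvb : φ (-1, -1) * φ (2, -2) = 3 * φ (1, -1) := by
    linear_combination a10 + φ (-1, 1) * h2m1
  -- derive 8c = 5
  have hA : (4 * c + 2) * (4 * c) = (3 * φ (1, -1)) * (3 * c + 6) := by
    calc (4 * c + 2) * (4 * c)
        = (φ (-1, -1) * φ (1, -2)) * (φ (2, -2) * (c + 4)) := by rw [hvw, hb]
      _ = (φ (-1, -1) * φ (2, -2)) * (φ (1, -2) * (c + 4)) := by ring
      _ = (3 * φ (1, -1)) * (3 * c + 6) := by rw [hvb, hw]
  have h16 : c * ((8 * c - 5) * 2) = 0 := by linear_combination hA + 9 * ha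
  have hc58 : c = 5 / 8 := by
    have h := (mul_eq_zero.mp h16).resolve_left hc0
    linear_combination h / 16
  -- φ(-2,1) = 0
  have hm21 : φ (-2, 1) = 0 := by
    have h : φ (-2, 1) * (c - 2) = 0 := by
      linear_combination rm21 + φ (-2, 1) * f1 - φ (-2, 1) * fm1
    exact (mul_eq_zero.mp h).resolve_right (sub_ne_zero_of_ne hc2)
  -- final numeric contradiction
  rw [hc58] at ha hb
  have haval : φ (1, -1) = 10 / 21 := by linear_combination (8 / 21 : ℂ) * ha
  have hbval : φ (2, -2) = 20 / 37 := by linear_combination (8 / 37 : ℂ) * hb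
  have huval : φ (1 : ℤ × ℤ) = -2 / 3 := by linear_combination huv / 3
  have hphim11 : φ (-1, 1) = φ (1, -1) + 2 := by linear_combination -e1m1
  have hphim22 : φ (-2, 2) = φ (2, -2) + 4 := by linear_combination -e2m2
  rw [hphim11, hphim22, hm21, haval, hbval, show φ (1, 1) = φ (1 : ℤ × ℤ) from rfl, huval] at a13
  norm_num at a13
end

section
/- Let φ : ℤ × ℤ → ℂ satisfy (E1) and (E2), and suppose φ(0,0) is not an even integer. Then φ(2,0) + 4 = φ(0,0). -/
theorem stmt_8 (φ : ℤ × ℤ → ℂ)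
    (hE1 : ∀ m n : ℤ, φ (m, n) - φ (n, m) = (n : ℂ) - m)
    (hE2 : ∀ m n l : ℤ, ((n : ℂ) - m) * φ (m + n, l)
        = φ (m, l) * φ (n, m + l) - φ (n, l) * φ (m, n + l))
    (h0 : ¬ ∃ N : ℤ, φ (0, 0) = 2 * N) :
    φ (2, 0) + 4 = φ (0, 0) := by
  have hA : ∀ n l : ℤ, φ (n, l) = 0 ∨ φ (0, n + l) = φ (0, l) - n := by
    intro n l
    have h := hE2 0 n l
    simp only [zero_add, Int.cast_zero, sub_zero] at h
    rcases mul_eq_zero.mp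
        (show φ (n, l) * ((n : ℂ) - φ (0, l) + φ (0, n + l)) = 0 by linear_combination h)
        with h1 | h1
    · exact Or.inl h1
    · exact Or.inr (by linear_combination h1)
  have hG : ∀ n : ℤ, φ (0, n) = (n : ℂ) ∨ φ (0, n) = φ (0, 0) - n := by
    intro n
    rcases hA n 0 with h1 | h1
    · left
      have h2 := hE1 n 0
      rw [h1] at h2
      linear_combination -h2
    · right
      rw [add_zero] at h1
      exact h1
  have hK : ∀ n l : ℤ, n ≠ l →
      φ (0, n + l) = φ (0, l) - n ∨ φ (0, n + l) = φ (0, n) - l := by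
    intro n l hnl
    rcases hA n l with h1 | h1
    · rcases hA l n with h2 | h2
      · exfalso
        have h3 := hE1 n l
        rw [h1, h2] at h3
        have : (l : ℂ) = (n : ℂ) := by linear_combination -h3
        exact hnl (by exact_mod_cast this.symm)
      · right
        rw [add_comm l n] at h2
        exact h2
    · left
      exact h1
  have h20 : φ (2, 0) = φ (0, 2) - 2 := by
    have h := hE1 2 0
    push_cast at h
    linear_combination h
  rcases hG 2 with h2 | h2
  · -- g(2) = 2 : derive contradiction
    exfalso
    push_cast at h2
    rcases hG (-1) with hm | hm
    · -- g(-1) = -1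
      push_cast at hm
      have hk := hK 2 (-1) (by norm_num)
      push_cast at hk
      norm_num at hk
      rcases hG 1 with h1 | h1 <;> push_cast at h1 <;> rcases hk with hk | hk
      · rw [h1, hm] at hk; norm_num at hk
      · rw [h1, h2] at hk; norm_num at hk
      · exact h0 ⟨-1, by push_cast; linear_combination hk - h1 + hm⟩
      · exact h0 ⟨2, by push_cast; linear_combination hk - h1 + h2⟩
    · -- g(-1) = a + 1
      push_cast at hm
      rcases hG 3 with h3 | h3 <;> push_cast at h3
      · -- g(3) = 3 : use K 3 2 and g(5)
        have hk := hK 3 2 (by norm_num)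
        norm_num at hk
        push_cast at hk
        rcases hG 5 with h5 | h5 <;> push_cast at h5 <;> rcases hk with hk | hk
        · rw [h5, h2] at hk; norm_num at hk
        · rw [h5, h3] at hk; norm_num at hk
        · exact h0 ⟨2, by push_cast; linear_combination hk - h5 + h2⟩
        · exact h0 ⟨3, by push_cast; linear_combination hk - h5 + h3⟩
      · -- g(3) = a - 3 : use K 3 (-1)
        have hk := hK 3 (-1) (by norm_num)
        norm_num at hk
        push_cast at hk
        rcases hk with hk | hk
        · exact h0 ⟨2, by push_cast; linear_combination -hk + h2 - hm⟩
        · exact h0 ⟨2, by push_cast; linear_combination -hk + h2 - h3⟩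
  · -- g(2) = a - 2 : conclude
    push_cast at h2
    rw [h20, h2]
    ring
end

section
/- Let φ : ℤ × ℤ → ℂ satisfy (E1) and (E2). Let L be a complex Lie algebra admitting a basis W : ℤ → L with ⁅W_m, W_n⁆ = (n−m)·W_{m+n} for all m,n ∈ ℤ (the Witt algebra), and let S = ℤ →₀ ℂ be the L-module on which the action is determined by W_m · v_n = −φ(m,n)·v_{m+n}, where {v_n | n ∈ ℤ} is the standard basis of S. Then S is an indecomposable representation of L: there do not exist L-submodules S₁, S₂ of S, both nonzero, with S₁ ∩ S₂ = 0 and S₁ + S₂ = S. -/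
theorem phi_formula (φ : ℤ × ℤ → ℂ)
    (hE1 : ∀ m n : ℤ, φ (m, n) - φ (n, m) = (n : ℂ) - m)
    (hE2 : ∀ m n l : ℤ, ((n : ℂ) - m) * φ (m + n, l)
        = φ (m, l) * φ (n, m + l) - φ (n, l) * φ (m, n + l)) :
    ∀ m n : ℤ, φ (m, n) = φ (0, 0) - 2 * m - n := by
  have hcast : ∀ a b : ℤ, a ≠ b → ((a : ℂ) - b) ≠ 0 := by
    intro a b h
    have : (a : ℂ) ≠ b := by exact_mod_cast h
    exact sub_ne_zero_of_ne this
  -- F1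
  have hF1 : ∀ n l : ℤ, φ (n, l) ≠ 0 → φ (0, n + l) = φ (0, l) - n := by
    intro n l h
    have e := hE2 0 n l
    push_cast at e
    simp only [zero_add] at e
    have h0 : φ (n, l) * (φ (0, l) - φ (0, n + l) - n) = 0 := by linear_combination -e
    rcases mul_eq_zero.mp h0 with h' | h'
    · exact absurd h' h
    · linear_combination -h'
  -- F2
  have hg2 : ∀ m n : ℤ, m ≠ n →
      φ (0, m + n) = φ (0, n) - m ∨ φ (0, m + n) = φ (0, m) - n := by
    intro m n hmn
    by_cases h : φ (m, n) = 0
    · right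
      have hb : φ (n, m) ≠ 0 := by
        intro hc
        have := hE1 m n
        rw [h, hc] at this
        exact hcast n m (Ne.symm hmn) (by linear_combination -this)
      have := hF1 n m hb
      rw [add_comm] at this
      exact this
    · left; exact hF1 m n h
  -- values at (k,0)
  have hval : ∀ k : ℤ, φ (k, 0) = φ (0, k) - k := by
    intro k
    have h := hE1 k 0
    push_cast at h
    linear_combination h
  have hswap : ∀ m n : ℤ, φ (n, m) = φ (m, n) + m - n := by
    intro m n; linear_combination -hE1 m n
  have hstar : ∀ m n : ℤ, ((n:ℂ) - m) * (φ (0, m) + φ (0, m + n) - 2*m - n)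
      = φ (m, n) * (φ (0, m) + m - φ (0, n) - n + 2*n - 2*m) := by
    intro m n
    have e := hE2 m n 0
    simp only [add_zero] at e
    rw [hval (m+n), hval m, hval n, hswap m n] at e
    push_cast at e
    linear_combination e
  -- dichotomy
  have hdich : ∀ m n : ℤ, m ≠ n → φ (0, m) + m ≠ φ (0, n) + n →
      (φ (0, n) = n + m ∨ φ (0, m) = m + n) := by
    intro m n hmn hg
    rcases hg2 m n hmn with h | h
    · -- φ (0, m+n) = φ (0,n) - m
      left
      have hb : φ (n, m) = 0 := by
        by_contra hc
        have h2 := hF1 n m hc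
        rw [add_comm] at h2
        exact hg (by linear_combination h - h2)
      have hs := hstar n m
      rw [add_comm n m, hb, zero_mul] at hs
      rcases mul_eq_zero.mp hs with h' | h'
      · exfalso
        have hmn' : (m:ℂ) = n := by linear_combination h'
        exact hmn (by exact_mod_cast hmn')
      · linear_combination (h' - h) / 2
    · -- φ (0, m+n) = φ (0,m) - n
      right
      have hb : φ (m, n) = 0 := by
        by_contra hc
        have h2 := hF1 m n hc
        exact hg (by linear_combination h2 - h)
      have hs := hstar m n
      rw [hb, zero_mul] at hs
      rcases mul_eq_zero.mp hs with h' | h'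
      · exfalso
        have hmn' : (m:ℂ) = n := by linear_combination -h'
        exact hmn (by exact_mod_cast hmn')
      · linear_combination (h' - h) / 2
  -- g is constant
  have aux : ∀ p q : ℤ, φ (0, q) = (q:ℂ) + p → φ (0, p) + p ≠ φ (0, q) + q → False := by
    intro p q hq hne
    have step1 : ∀ n : ℤ, n ≠ p → n ≠ q → φ (0, n) + n ≠ φ (0, q) + q → φ (0, n) = (n:ℂ) + q := by
      intro n hnp hnq hne'
      rcases hdich n q hnq hne' with h | h
      · exfalso
        have hnp' : (n:ℂ) = p := by linear_combination hq - h
        exact hnp (by exact_mod_cast hnp')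
      · exact h
    have H1 : ∀ n₁ n₂ : ℤ, n₁ ≠ n₂ → n₁ ≠ p → n₁ ≠ q → n₂ ≠ p → n₂ ≠ q →
        φ (0, n₁) + n₁ ≠ φ (0, q) + q → φ (0, n₂) + n₂ ≠ φ (0, q) + q → False := by
      intro n₁ n₂ h12 h1p h1q h2p h2q he1 he2
      have k1 := step1 n₁ h1p h1q he1
      have k2 := step1 n₂ h2p h2q he2
      have hneq : φ (0, n₁) + (n₁:ℂ) ≠ φ (0, n₂) + n₂ := by
        intro hh
        have h12' : (n₁:ℂ) = n₂ := by linear_combination (hh - k1 + k2)/2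
        exact h12 (by exact_mod_cast h12')
      rcases hdich n₁ n₂ h12 hneq with h | h
      · have hq' : (n₁:ℂ) = q := by linear_combination k2 - h
        exact h1q (by exact_mod_cast hq')
      · have hq' : (n₂:ℂ) = q := by linear_combination k1 - h
        exact h2q (by exact_mod_cast hq')
    have H2 : ∀ n : ℤ, n ≠ p → n ≠ q → φ (0, n) + n = φ (0, q) + q →
        φ (0, q) + (q:ℂ) ≠ 2*n + p → φ (0, p) ≠ (p:ℂ) + n → False := by
      intro n hnp hnq heq hpin1 hpin2
      have hne' : φ (0, p) + (p:ℂ) ≠ φ (0, n) + n := by rw [heq]; exact hne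
      rcases hdich p n (Ne.symm hnp) hne' with h | h
      · exact hpin1 (by linear_combination h - heq)
      · exact hpin2 h
    set M := max p q with hM
    have hMp : p ≤ M := le_max_left _ _
    have hMq : q ≤ M := le_max_right _ _
    have pick2 : ∀ j : ℤ, 1 ≤ j → ∃ x : ℤ, (φ (0, x) + (x:ℂ) = φ (0, q) + q) ∧ M + j ≤ x ∧ x ≤ M + j + 1 := by
      intro j hj
      by_cases h : φ (0, M + j) + ((M+j:ℤ):ℂ) = φ (0, q) + q
      · exact ⟨M+j, h, le_refl _, by omega⟩
      · by_cases h' : φ (0, M + j + 1) + ((M+j+1:ℤ):ℂ) = φ (0, q) + q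
        · exact ⟨M+j+1, h', by omega, le_refl _⟩
        · exact absurd (H1 (M+j) (M+j+1) (by omega) (by omega) (by omega) (by omega) (by omega) h h') id
    obtain ⟨x, hxe, hx1, hx2⟩ := pick2 1 (by norm_num)
    obtain ⟨y, hye, hy1, hy2⟩ := pick2 3 (by norm_num)
    obtain ⟨z, hze, hz1, hz2⟩ := pick2 5 (by norm_num)
    have hbad : ∀ n : ℤ, n ≠ p → n ≠ q → φ (0, n) + (n:ℂ) = φ (0, q) + q →
        (φ (0, q) + (q:ℂ) = 2*n + p ∨ φ (0, p) = (p:ℂ) + n) := by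
      intro n h1 h2 h3
      by_contra hc
      push_neg at hc
      exact H2 n h1 h2 h3 hc.1 hc.2
    have pinA : ∀ u v : ℤ, φ (0,q) + (q:ℂ) = 2*u + p → φ (0,q) + (q:ℂ) = 2*v + p → u = v := by
      intro u v h1 h2
      have huv : (u:ℂ) = v := by linear_combination (h2 - h1)/2
      exact_mod_cast huv
    have pinB : ∀ u v : ℤ, φ (0,p) = (p:ℂ) + u → φ (0,p) = (p:ℂ) + v → u = v := by
      intro u v h1 h2
      have huv : (u:ℂ) = v := by linear_combination h2 - h1
      exact_mod_cast huv
    have hxy : x ≠ y := by omega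
    have hxz : x ≠ z := by omega
    have hyz : y ≠ z := by omega
    rcases hbad x (by omega) (by omega) hxe with hA | hB <;>
      rcases hbad y (by omega) (by omega) hye with hA' | hB' <;>
        rcases hbad z (by omega) (by omega) hze with hA'' | hB''
    · exact hxy (pinA x y hA hA')
    · exact hxy (pinA x y hA hA')
    · exact hxz (pinA x z hA hA'')
    · exact hyz (pinB y z hB' hB'')
    · exact hyz (pinA y z hA' hA'')
    · exact hxz (pinB x z hB hB'')
    · exact hxy (pinB x y hB hB')
    · exact hxy (pinB x y hB hB')
  have hgc : ∀ p q : ℤ, φ (0, p) + (p:ℂ) = φ (0, q) + q := by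
    intro p q
    by_contra hne
    have hpq : p ≠ q := by
      intro h; rw [h] at hne; exact hne rfl
    rcases hdich p q hpq hne with h | h
    · exact aux p q h hne
    · exact aux q p h (fun hh => hne hh.symm)
  -- off-diagonal formula
  have hoff : ∀ m n : ℤ, m ≠ n → φ (m, n) = φ (0,0) - 2*m - n := by
    intro m n hmn
    have hs := hstar m n
    have h1 := hgc m 0
    have h2 := hgc n 0
    have h3 := hgc (m+n) 0
    push_cast at h1 h2 h3
    have hnm : ((n:ℂ) - m) ≠ 0 := hcast n m (Ne.symm hmn)
    have key : ((n:ℂ) - m) * (φ (m,n) * 2) = ((n:ℂ) - m) * ((φ (0,0) - 2*m - n)*2) := by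
      linear_combination -hs + φ (m,n) * (h2 - h1) + ((n:ℂ)-m) * (h1 + h3)
    have hkey := mul_left_cancel₀ hnm key
    linear_combination hkey/2
  -- diagonal formula
  have hdiag0 : ∀ m n : ℤ, n ≠ 0 → n ≠ m → 2*n ≠ m → φ (0,0) - (m:ℂ) - n ≠ 0 →
      φ (m, m) = φ (0,0) - 3*m := by
    intro m n h0 h1 h2 hpin
    have e := hE2 m n (m - n)
    rw [show m + (m - n) = 2*m - n from by ring, show n + (m - n) = m from by ring] at e
    rw [hoff (m+n) (m-n) (by omega), hoff m (m-n) (by omega), hoff n (2*m-n) (by omega),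
        hoff n (m-n) (by omega)] at e
    push_cast at e
    have key : (φ (0,0) - (m:ℂ) - n) * φ (m,m) = (φ (0,0) - (m:ℂ) - n) * (φ (0,0) - 3*m) := by
      linear_combination e
    exact mul_left_cancel₀ hpin key
  have hdiag : ∀ m : ℤ, φ (m, m) = φ (0,0) - 3*m := by
    intro m
    set a : ℤ := 2*(m.natAbs:ℤ) + 1 with ha
    by_cases hp : φ (0,0) - (m:ℂ) - a ≠ 0
    · exact hdiag0 m a (by omega) (by omega) (by omega) hp
    · push_neg at hp
      refine hdiag0 m (a+1) (by omega) (by omega) (by omega) ?_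
      intro hc
      push_cast at hc hp
      have h01 : (0:ℂ) = 1 := by linear_combination hc - hp
      exact zero_ne_one h01
  intro m n
  by_cases hmn : m = n
  · subst hmn
    rw [hdiag m]
    ring
  · exact hoff m n hmn

theorem stmt_10 (φ : ℤ × ℤ → ℂ)
    (hE1 : ∀ m n : ℤ, φ (m, n) - φ (n, m) = (n : ℂ) - m)
    (hE2 : ∀ m n l : ℤ, ((n : ℂ) - m) * φ (m + n, l)
        = φ (m, l) * φ (n, m + l) - φ (n, l) * φ (m, n + l))
    (L : Type) [LieRing L] [LieAlgebra ℂ L]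
    (B : Module.Basis ℤ ℂ L)
    (hB : ∀ m n : ℤ, ⁅B m, B n⁆ = ((n : ℂ) - m) • B (m + n))
    [LieRingModule L (ℤ →₀ ℂ)] [LieModule ℂ L (ℤ →₀ ℂ)]
    (hact : ∀ m n : ℤ, ⁅B m, (Finsupp.single n 1 : ℤ →₀ ℂ)⁆
        = (-φ (m, n)) • (Finsupp.single (m + n) 1 : ℤ →₀ ℂ)) :
    ¬ ∃ S₁ S₂ : LieSubmodule ℂ L (ℤ →₀ ℂ),
      S₁ ≠ ⊥ ∧ S₂ ≠ ⊥ ∧ S₁ ⊓ S₂ = ⊥ ∧ S₁ ⊔ S₂ = ⊤ := by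
  rintro ⟨S₁, S₂, h1, h2, hinf, -⟩
  have hφ := phi_formula φ hE1 hE2
  set c : ℂ := φ (0, 0) with hc
  -- coordinates of the action of B 0
  have hT : ∀ (v : ℤ →₀ ℂ) (n : ℤ), (⁅B 0, v⁆ : ℤ →₀ ℂ) n = ((n:ℂ) - c) * v n := by
    intro v
    induction v using Finsupp.induction_linear with
    | zero => intro n; simp
    | add f g hf hg =>
      intro n
      rw [lie_add, Finsupp.add_apply, hf, hg, Finsupp.add_apply]
      ring
    | single a b =>
      intro n
      have hs : (Finsupp.single a b : ℤ →₀ ℂ) = b • Finsupp.single a 1 := by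
        rw [Finsupp.smul_single, smul_eq_mul, mul_one]
      rw [hs, lie_smul, hact 0 a, zero_add]
      have hφ0 : -φ (0, a) = (a:ℂ) - c := by
        rw [hφ 0 a]; push_cast; ring
      rw [hφ0]
      simp only [Finsupp.smul_apply, Finsupp.single_apply, smul_eq_mul]
      by_cases hna : a = n <;> simp [hna] <;> ring
  -- any nonzero element of a Lie submodule yields basis vectors in it
  have hgrade : ∀ (S : LieSubmodule ℂ L (ℤ →₀ ℂ)) (v : ℤ →₀ ℂ), v ∈ S →
      ∀ n ∈ v.support, (Finsupp.single n 1 : ℤ →₀ ℂ) ∈ S := by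
    intro S
    suffices h : ∀ (k : ℕ) (v : ℤ →₀ ℂ), v.support.card = k → v ∈ S →
        ∀ n ∈ v.support, (Finsupp.single n 1 : ℤ →₀ ℂ) ∈ S by
      intro v hv n hn
      exact h v.support.card v rfl hv n hn
    intro k
    induction k with
    | zero =>
      intro v hcard hv n hn
      rw [Finset.card_eq_zero] at hcard
      rw [hcard] at hn
      exact absurd hn (Finset.notMem_empty n)
    | succ k ih =>
      intro v hcard hv n hn
      by_cases hone : v.support = {n}
      · have hvn : v n ≠ 0 := Finsupp.mem_support_iff.mp hn
        have key : (Finsupp.single n 1 : ℤ →₀ ℂ) = (v n)⁻¹ • v := by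
          ext m
          rw [Finsupp.smul_apply, smul_eq_mul, Finsupp.single_apply]
          by_cases hmn : n = m
          · subst hmn; simp [inv_mul_cancel₀ hvn]
          · have hvm : v m = 0 := by
              by_contra hcm
              have hms : m ∈ v.support := Finsupp.mem_support_iff.mpr hcm
              rw [hone] at hms
              exact hmn (Finset.mem_singleton.mp hms).symm
            simp [hmn, hvm]
        rw [key]
        exact S.smul_mem _ hv
      · have hex : ∃ n₀ ∈ v.support, n₀ ≠ n := by
          by_contra hcon
          push_neg at hcon
          exact hone (Finset.eq_singleton_iff_unique_mem.mpr ⟨hn, hcon⟩)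
        obtain ⟨n₀, hn₀s, hn₀n⟩ := hex
        set w : ℤ →₀ ℂ := ⁅B 0, v⁆ - ((n₀:ℂ) - c) • v with hw
        have hwmem : w ∈ S := S.sub_mem (S.lie_mem hv) (S.smul_mem _ hv)
        have hwcoord : ∀ m : ℤ, w m = ((m:ℂ) - n₀) * v m := by
          intro m
          rw [hw, Finsupp.sub_apply, Finsupp.smul_apply, hT, smul_eq_mul]
          ring
        have hwsupp : w.support = v.support.erase n₀ := by
          ext m
          rw [Finsupp.mem_support_iff, hwcoord, Finset.mem_erase, Finsupp.mem_support_iff]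
          constructor
          · intro hne
            rcases mul_ne_zero_iff.mp hne with ⟨ha, hb⟩
            refine ⟨?_, hb⟩
            intro hmn; rw [hmn] at ha; exact ha (sub_self _)
          · rintro ⟨hmn, hb⟩
            refine mul_ne_zero ?_ hb
            have : (m:ℂ) ≠ n₀ := by exact_mod_cast hmn
            exact sub_ne_zero_of_ne this
        have hwcard : w.support.card = k := by
          rw [hwsupp, Finset.card_erase_of_mem hn₀s, hcard]
          omega
        have hnw : n ∈ w.support := by
          rw [hwsupp, Finset.mem_erase]
          exact ⟨hn₀n.symm, hn⟩
        exact ih w hwcard hwmem n hnw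
  -- hop between basis vectors
  have hop : ∀ (S : LieSubmodule ℂ L (ℤ →₀ ℂ)) (p q : ℤ), φ (q - p, p) ≠ 0 →
      (Finsupp.single p 1 : ℤ →₀ ℂ) ∈ S → (Finsupp.single q 1 : ℤ →₀ ℂ) ∈ S := by
    intro S p q hne hp
    have hb := hact (q - p) p
    rw [show q - p + p = q from by ring] at hb
    have : (Finsupp.single q 1 : ℤ →₀ ℂ)
        = (-φ (q - p, p))⁻¹ • (⁅B (q - p), (Finsupp.single p 1 : ℤ →₀ ℂ)⁆ : ℤ →₀ ℂ) := by
      rw [hb, smul_smul, inv_mul_cancel₀ (neg_ne_zero.mpr hne), one_smul]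
    rw [this]
    exact S.smul_mem _ (S.lie_mem hp)
  -- transfer between any two basis vectors
  have htrans : ∀ (S : LieSubmodule ℂ L (ℤ →₀ ℂ)) (p q : ℤ),
      (Finsupp.single p 1 : ℤ →₀ ℂ) ∈ S → (Finsupp.single q 1 : ℤ →₀ ℂ) ∈ S := by
    intro S p q hp
    by_cases hzero : φ (q - p, p) = 0
    · have hcz : c = 2*(q:ℂ) - p := by
        have := hφ (q - p) p
        rw [hzero] at this
        push_cast at this
        linear_combination -this
      set t : ℤ := if p - q = 1 then 2 else 1 with ht
      have htne : t ≠ p - q ∧ t ≠ 0 := by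
        by_cases h : p - q = 1 <;> simp [ht, h] <;> omega
      have hr : (Finsupp.single (q + t) 1 : ℤ →₀ ℂ) ∈ S := by
        refine hop S p (q + t) ?_ hp
        rw [hφ (q + t - p) p]
        push_cast
        rw [hcz]
        intro hcon
        have : (t:ℂ) = 0 := by linear_combination -hcon/2
        exact htne.2 (by exact_mod_cast this)
      refine hop S (q + t) q ?_ hr
      rw [hφ (q - (q + t)) (q + t)]
      push_cast
      rw [hcz]
      intro hcon
      have : (t:ℂ) = (p:ℂ) - q := by linear_combination hcon
      have ht' : t = p - q := by exact_mod_cast this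
      exact htne.1 ht'
    · exact hop S p q hzero hp
  -- extract a basis vector from each submodule
  have hbasis : ∀ (S : LieSubmodule ℂ L (ℤ →₀ ℂ)), S ≠ ⊥ →
      (Finsupp.single 0 1 : ℤ →₀ ℂ) ∈ S := by
    intro S hS
    have : ∃ v ∈ S, v ≠ (0 : ℤ →₀ ℂ) := by
      by_contra hcon
      push_neg at hcon
      exact hS ((LieSubmodule.eq_bot_iff S).mpr hcon)
    obtain ⟨v, hvS, hv0⟩ := this
    obtain ⟨p, hp⟩ := Finsupp.support_nonempty_iff.mpr hv0
    exact htrans S p 0 (hgrade S v hvS p hp)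
  have m1 := hbasis S₁ h1
  have m2 := hbasis S₂ h2
  have : (Finsupp.single 0 1 : ℤ →₀ ℂ) ∈ S₁ ⊓ S₂ := ⟨m1, m2⟩
  rw [hinf] at this
  rw [LieSubmodule.mem_bot] at this
  exact one_ne_zero (Finsupp.single_eq_zero.mp this)
end

section
/- Let φ : ℤ × ℤ → ℂ satisfy (E1) and (E2). For each m ∈ ℤ let σ_m be the ℂ-linear endomorphism of S = ℤ →₀ ℂ determined on the standard basis {W_n} by σ_m(W_n) = −φ(m,n)·W_{m+n}. Let α ∈ ℂ, and for each m ∈ ℤ let τ_m be the ℂ-linear endomorphism of V = ℤ →₀ ℂ determined on the standard basis {v_i} by τ_m(v_i) = (m+i)·v_{m+i} for i ∈ ℤ, i ≠ 0, and τ_m(v_0) = m(α+m)·v_m. Then there is no ℂ-linear bijection f : S → V such that f ∘ σ_m = τ_m ∘ f for all m ∈ ℤ. (That is, the representation (ρ, S) given by negative left multiplication is not isomorphic to V_α as 𝒲-representations.) -/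
lemma W_apply (m k : ℤ) : W m k = if m = k then 1 else 0 := Finsupp.single_apply

lemma W_ne_zero (m : ℤ) : W m ≠ 0 := by
  simp only [W]
  intro h
  exact one_ne_zero (Finsupp.single_eq_zero.1 h)

lemma smul_W_eq {a b : ℂ} {s t : ℤ} (h : a • W s = b • W t) (hb : b ≠ 0) :
    s = t ∧ a = b := by
  have ht := DFunLike.congr_fun h t
  rw [Finsupp.smul_apply, Finsupp.smul_apply, W_apply, W_apply, if_pos rfl,
    smul_eq_mul, smul_eq_mul, mul_one] at ht
  rcases eq_or_ne s t with hst | hst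
  · subst hst
    rw [if_pos rfl, mul_one] at ht
    exact ⟨rfl, ht⟩
  · rw [if_neg hst, mul_zero] at ht
    exact absurd ht.symm hb

theorem stmt_11 (φ : ℤ × ℤ → ℂ)
    (hE1 : ∀ m n : ℤ, φ (m, n) - φ (n, m) = (n : ℂ) - m)
    (hE2 : ∀ m n l : ℤ, ((n : ℂ) - m) * φ (m + n, l)
        = φ (m, l) * φ (n, m + l) - φ (n, l) * φ (m, n + l))
    (α : ℂ)
    (σ τ : ℤ → ((ℤ →₀ ℂ) →ₗ[ℂ] (ℤ →₀ ℂ)))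
    (hσ : ∀ m n : ℤ, σ m (W n) = (-φ (m, n)) • W (m + n))
    (hτ : ∀ m i : ℤ, i ≠ 0 → τ m (W i) = ((m : ℂ) + i) • W (m + i))
    (hτ0 : ∀ m : ℤ, τ m (W 0) = ((m : ℂ) * (α + m)) • W m) :
    ¬ ∃ f : (ℤ →₀ ℂ) ≃ₗ[ℂ] (ℤ →₀ ℂ),
      ∀ (m : ℤ) (x : ℤ →₀ ℂ), f (σ m x) = τ m (f x) := by
  rintro ⟨f, hf⟩
  -- τ 0 acts diagonally
  have τ0_diag : ∀ (z : ℤ →₀ ℂ) (i : ℤ), (τ 0 z) i = (i : ℂ) * z i := by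
    intro z
    induction z using Finsupp.induction_linear with
    | zero => intro i; simp
    | add x y hx hy =>
        intro i
        rw [map_add, Finsupp.add_apply, hx i, hy i, Finsupp.add_apply]
        ring
    | single a b =>
        intro i
        have h1 : (Finsupp.single a b : ℤ →₀ ℂ) = b • W a := by
          simp only [W]
          rw [Finsupp.smul_single, smul_eq_mul, mul_one]
        rw [h1, map_smul]
        rcases eq_or_ne a 0 with rfl | ha
        · rw [hτ0 0]
          simp only [Int.cast_zero, zero_mul, zero_smul, smul_zero, Finsupp.coe_zero,
            Pi.zero_apply, Finsupp.smul_apply, W_apply, smul_eq_mul]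
          rcases eq_or_ne (0 : ℤ) i with rfl | hi
          · rw [if_pos rfl, mul_one, Int.cast_zero, zero_mul]
          · rw [if_neg hi, mul_zero, mul_zero]
        · rw [hτ 0 a ha]
          simp only [Int.cast_zero, zero_add, Finsupp.smul_apply, W_apply, smul_eq_mul]
          rcases eq_or_ne a i with rfl | hai
          · rw [if_pos rfl, mul_one]; ring
          · rw [if_neg hai, mul_zero, mul_zero, mul_zero]
  -- every f (W n) is a nonzero multiple of a single basis vector
  obtain ⟨g, c, hc, hfW⟩ : ∃ (g : ℤ → ℤ) (c : ℤ → ℂ), (∀ n, c n ≠ 0) ∧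
      ∀ n, f (W n) = c n • W (g n) := by
    have key : ∀ n : ℤ, ∃ (gi : ℤ) (cc : ℂ), cc ≠ 0 ∧ f (W n) = cc • W gi := by
      intro n
      set y := f (W n) with hy
      have hy0 : y ≠ 0 := (LinearEquiv.map_ne_zero_iff f).2 (W_ne_zero n)
      have heq : (-φ (0, n)) • y = τ 0 y := by
        have h := hf 0 (W n)
        rw [hσ 0 n, map_smul, zero_add] at h
        exact h
      have hcoord : ∀ i : ℤ, (i : ℂ) * y i = (-φ (0, n)) * y i := by
        intro i
        have h2 := DFunLike.congr_fun heq i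
        rw [Finsupp.smul_apply, smul_eq_mul, τ0_diag y i] at h2
        exact h2.symm
      have hex : ∃ i, y i ≠ 0 := by
        by_contra hcon
        push_neg at hcon
        exact hy0 (by ext i; simp [hcon i])
      obtain ⟨i₀, hi₀⟩ := hex
      have hval : (i₀ : ℂ) = -φ (0, n) := mul_right_cancel₀ hi₀ (hcoord i₀)
      have hzero : ∀ i, i ≠ i₀ → y i = 0 := by
        intro i hii
        have h2 := hcoord i
        rw [← hval] at h2
        have h3 : ((i : ℂ) - (i₀ : ℂ)) * y i = 0 := by linear_combination h2
        rcases mul_eq_zero.1 h3 with h4 | h4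
        · exact absurd (by exact_mod_cast sub_eq_zero.1 h4 : i = i₀) hii
        · exact h4
      refine ⟨i₀, y i₀, hi₀, ?_⟩
      ext j
      rcases eq_or_ne j i₀ with rfl | hj
      · rw [Finsupp.smul_apply, W_apply, if_pos rfl, smul_eq_mul, mul_one]
      · rw [Finsupp.smul_apply, W_apply, if_neg (Ne.symm hj), smul_eq_mul, mul_zero]
        exact hzero j hj
    choose g c h1 h2 using key
    exact ⟨g, c, h1, h2⟩
  -- expansion of f on an arbitrary element
  have hexp : ∀ z : ℤ →₀ ℂ, f z = z.sum fun n a => (a * c n) • W (g n) := by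
    intro z
    induction z using Finsupp.induction_linear with
    | zero => simp
    | add x y hx hy =>
        rw [map_add, hx, hy, Finsupp.sum_add_index']
        · intro n
          rw [zero_mul, zero_smul]
        · intro n a b
          rw [add_mul, add_smul]
    | single a b =>
        have h1 : (Finsupp.single a b : ℤ →₀ ℂ) = b • W a := by
          simp only [W]
          rw [Finsupp.smul_single, smul_eq_mul, mul_one]
        rw [Finsupp.sum_single_index (by rw [zero_mul, zero_smul]), h1, map_smul,
          hfW a, smul_smul]
  -- there is n₀ with g n₀ = 0
  obtain ⟨n₀, hn₀⟩ : ∃ n₀ : ℤ, g n₀ = 0 := by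
    by_contra hcon
    push_neg at hcon
    have h1 : f (f.symm (W 0)) = W 0 := f.apply_symm_apply (W 0)
    rw [hexp (f.symm (W 0))] at h1
    have h2 := DFunLike.congr_fun h1 0
    rw [Finsupp.sum_apply] at h2
    have h3 : ((f.symm (W 0)).sum fun n a => ((a * c n) • W (g n)) 0) = 0 := by
      rw [Finsupp.sum]
      apply Finset.sum_eq_zero
      intro n _
      rw [Finsupp.smul_apply, W_apply, if_neg (hcon n), smul_eq_mul, mul_zero]
    rw [h3, W_apply, if_pos rfl] at h2
    exact one_ne_zero h2.symm
  -- the at most one integer annihilating α + ·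
  obtain ⟨A, hA⟩ : ∃ A : ℤ, ∀ x : ℤ, α + (x : ℂ) = 0 → x = A := by
    by_cases hex : ∃ a : ℤ, α + (a : ℂ) = 0
    · obtain ⟨a, ha⟩ := hex
      refine ⟨a, fun x hx => ?_⟩
      have : (x : ℂ) = (a : ℂ) := by linear_combination hx - ha
      exact_mod_cast this
    · exact ⟨0, fun x hx => absurd ⟨x, hx⟩ hex⟩
  set u : ℤ := (n₀.natAbs : ℤ) + (A.natAbs : ℤ) + 1 with hu_def
  have good : ∀ k : ℤ, 1 ≤ k → k ≤ 8 →
      (k * u - n₀ ≠ 0 ∧ α + ((k * u - n₀ : ℤ) : ℂ) ≠ 0) := by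
    intro k hk1 hk8
    have hku : u ≤ k * u := le_mul_of_one_le_left (by omega) hk1
    obtain ⟨w, hw⟩ : ∃ w, w = k * u := ⟨k * u, rfl⟩
    rw [← hw] at hku ⊢
    constructor
    · omega
    · intro hzero
      have hAA := hA _ hzero
      omega
  -- step 4 : g (m + n₀) = m for good m
  have step4 : ∀ m : ℤ, m ≠ 0 → α + (m : ℂ) ≠ 0 → g (m + n₀) = m := by
    intro m hm hαm
    have hL : f (σ m (W n₀)) = ((-φ (m, n₀)) * c (m + n₀)) • W (g (m + n₀)) := by
      rw [hσ m n₀, map_smul, hfW (m + n₀), smul_smul]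
    have hR : τ m (f (W n₀)) = (c n₀ * ((m : ℂ) * (α + (m : ℂ)))) • W m := by
      rw [hfW n₀, hn₀, map_smul, hτ0 m, smul_smul]
    have h := hL.symm.trans ((hf m (W n₀)).trans hR)
    have hb : c n₀ * ((m : ℂ) * (α + (m : ℂ))) ≠ 0 :=
      mul_ne_zero (hc n₀) (mul_ne_zero (Int.cast_ne_zero.2 hm) hαm)
    exact (smul_W_eq h hb).1
  -- step 5
  have step5 : ∀ j k : ℤ, j ≠ 0 → α + (j : ℂ) ≠ 0 → k + j ≠ 0 →
      α + ((k + j : ℤ) : ℂ) ≠ 0 →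
      (-φ (k, j + n₀)) * c (k + j + n₀) = c (j + n₀) * ((k : ℂ) + (j : ℂ)) := by
    intro j k hj hαj hkj hαkj
    have hgj : g (j + n₀) = j := step4 j hj hαj
    have hgkj : g (k + j + n₀) = k + j := step4 (k + j) hkj hαkj
    have hL : f (σ k (W (j + n₀))) = ((-φ (k, j + n₀)) * c (k + j + n₀)) • W (k + j) := by
      rw [hσ k (j + n₀), map_smul, show k + (j + n₀) = k + j + n₀ from by ring,
        hfW (k + j + n₀), hgkj, smul_smul]
    have hR : τ k (f (W (j + n₀))) = (c (j + n₀) * ((k : ℂ) + (j : ℂ))) • W (k + j) := by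
      rw [hfW (j + n₀), hgj, map_smul, hτ k j hj, smul_smul]
    have h := hL.symm.trans ((hf k (W (j + n₀))).trans hR)
    have hb : c (j + n₀) * ((k : ℂ) + (j : ℂ)) ≠ 0 := by
      refine mul_ne_zero (hc _) ?_
      have h5 : ((k + j : ℤ) : ℂ) ≠ 0 := Int.cast_ne_zero.2 hkj
      push_cast at h5
      exact h5
    exact (smul_W_eq h hb).2
  -- step 6 : the key linear relation
  have step6 : ∀ p q : ℤ, p ≠ 0 → α + (p : ℂ) ≠ 0 → q ≠ 0 → α + (q : ℂ) ≠ 0 →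
      p + q + n₀ ≠ 0 → α + ((p + q + n₀ : ℤ) : ℂ) ≠ 0 →
      ((p : ℂ) + (q : ℂ) + (n₀ : ℂ)) * (c (p + n₀) - c (q + n₀))
        = ((q : ℂ) - (p : ℂ)) * c (p + q + 2 * n₀) := by
    intro p q hp hαp hq hαq hs hαs
    have s5a := step5 q (p + n₀) hq hαq
      (by omega) (by rw [show (p + n₀) + q = p + q + n₀ from by ring]; exact hαs)
    have s5b := step5 p (q + n₀) hp hαp
      (by omega) (by rw [show (q + n₀) + p = p + q + n₀ from by ring]; exact hαs)
    rw [show (p + n₀) + q + n₀ = p + q + 2 * n₀ from by ring] at s5a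
    rw [show (q + n₀) + p + n₀ = p + q + 2 * n₀ from by ring] at s5b
    have e1 := hE1 (p + n₀) (q + n₀)
    push_cast at s5a s5b e1 ⊢
    linear_combination (c (p + q + 2 * n₀)) * e1 + s5a - s5b
  -- final contradiction
  set Q : ℤ → ℂ := fun k => c (k * u) / ((k : ℂ) * (u : ℂ) - (n₀ : ℂ)) with hQ_def
  have hden : ∀ k : ℤ, 1 ≤ k → k ≤ 8 → (k : ℂ) * (u : ℂ) - (n₀ : ℂ) ≠ 0 := by
    intro k h1 h8
    have h2 : ((k * u - n₀ : ℤ) : ℂ) ≠ 0 := Int.cast_ne_zero.2 (good k h1 h8).1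
    push_cast at h2
    exact h2
  have hQc : ∀ k : ℤ, 1 ≤ k → k ≤ 8 →
      ((k : ℂ) * (u : ℂ) - (n₀ : ℂ)) * Q k = c (k * u) := by
    intro k h1 h8
    simp only [hQ_def]
    rw [mul_comm, div_mul_cancel₀ _ (hden k h1 h8)]
  have rgen : ∀ k l : ℤ, 1 ≤ k → 1 ≤ l → k + l ≤ 8 →
      ((k : ℂ) * (u : ℂ) - (n₀ : ℂ)) * Q k - ((l : ℂ) * (u : ℂ) - (n₀ : ℂ)) * Q l
        = ((l : ℂ) - (k : ℂ)) * (u : ℂ) * Q (k + l) := by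
    intro k l hk hl hkl
    have gk := good k hk (by omega)
    have gl := good l hl (by omega)
    have gkl := good (k + l) (by omega) hkl
    have h6 := step6 (k * u - n₀) (l * u - n₀) gk.1 gk.2 gl.1 gl.2
      (by rw [show (k * u - n₀) + (l * u - n₀) + n₀ = (k + l) * u - n₀ from by ring]
          exact gkl.1)
      (by rw [show (k * u - n₀) + (l * u - n₀) + n₀ = (k + l) * u - n₀ from by ring]
          exact gkl.2)
    rw [show (k * u - n₀) + n₀ = k * u from by ring,
        show (l * u - n₀) + n₀ = l * u from by ring,
        show (k * u - n₀) + (l * u - n₀) + 2 * n₀ = (k + l) * u from by ring] at h6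
    have hqk := hQc k hk (by omega)
    have hql := hQc l hl (by omega)
    have hqkl := hQc (k + l) (by omega) hkl
    refine mul_left_cancel₀ (hden (k + l) (by omega) hkl) ?_
    push_cast at h6 hqk hql hqkl ⊢
    linear_combination h6 + (((k : ℂ) + l) * u - n₀) * hqk
      - (((k : ℂ) + l) * u - n₀) * hql - ((l : ℂ) - k) * u * hqkl
  have r12 := rgen 1 2 (by norm_num) (by norm_num) (by norm_num)
  have r13 := rgen 1 3 (by norm_num) (by norm_num) (by norm_num)
  have r23 := rgen 2 3 (by norm_num) (by norm_num) (by norm_num)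
  have r14 := rgen 1 4 (by norm_num) (by norm_num) (by norm_num)
  have r24 := rgen 2 4 (by norm_num) (by norm_num) (by norm_num)
  have r34 := rgen 3 4 (by norm_num) (by norm_num) (by norm_num)
  have r15 := rgen 1 5 (by norm_num) (by norm_num) (by norm_num)
  have r35 := rgen 3 5 (by norm_num) (by norm_num) (by norm_num)
  norm_num at r12 r13 r23 r14 r24 r34 r15 r35
  have hU : (u : ℂ) ≠ 0 := Int.cast_ne_zero.2 (by omega)
  have e1 : Q 3 + Q 5 = 2 * Q 4 := by
    refine mul_left_cancel₀ hU ?_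
    linear_combination -r12 + r13 - r23
  have e2 : Q 3 + 2 * Q 6 = 3 * Q 5 := by
    refine mul_left_cancel₀ hU ?_
    linear_combination -r12 + r14 - r24
  have e3 : 2 * Q 4 + Q 7 = 3 * Q 5 := by
    refine mul_left_cancel₀ hU ?_
    linear_combination -r13 + r14 - r34
  have e4 : Q 4 + Q 8 = 2 * Q 6 := by
    refine mul_left_cancel₀ (mul_ne_zero (two_ne_zero) hU) ?_
    linear_combination -r13 + r15 - r35
  have X : (6 * (u : ℂ) - (n₀ : ℂ)) * Q 3 = (8 * (u : ℂ) - (n₀ : ℂ)) * Q 4 := by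
    linear_combination r34 + (u : ℂ) * e3 + 3 * (u : ℂ) * e1
  have Y : (16 * (u : ℂ) - 2 * (n₀ : ℂ)) * Q 3 = (20 * (u : ℂ) - 2 * (n₀ : ℂ)) * Q 4 := by
    linear_combination r35 + (11 * (u : ℂ) - (n₀ : ℂ)) * e1 + 2 * (u : ℂ) * e2
      + 2 * (u : ℂ) * e4
  have hQ34 : Q 3 = Q 4 := by
    refine mul_left_cancel₀ (mul_ne_zero (by norm_num : (4 : ℂ) ≠ 0) hU) ?_
    linear_combination Y - 2 * X
  have hQ30 : Q 3 = 0 := by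
    have h2U : (2 : ℂ) * (u : ℂ) ≠ 0 := mul_ne_zero two_ne_zero hU
    refine mul_left_cancel₀ h2U ?_
    linear_combination (8 * (u : ℂ) - (n₀ : ℂ)) * hQ34 - X
  have hQ3ne : Q 3 ≠ 0 := by
    simp only [hQ_def]
    exact div_ne_zero (hc _) (hden 3 (by norm_num) (by norm_num))
  exact hQ3ne hQ30
end

section
/- Let φ : ℤ × ℤ → ℂ satisfy (E1) and (E2). For each m ∈ ℤ let σ_m be the ℂ-linear endomorphism of S = ℤ →₀ ℂ determined on the standard basis {W_n} by σ_m(W_n) = −φ(m,n)·W_{m+n}. Let β ∈ ℂ, and for each m ∈ ℤ let τ_m be the ℂ-linear endomorphism of V = ℤ →₀ ℂ determined on the standard basis {v_i} by τ_m(v_i) = i·v_{m+i} whenever m+i ≠ 0, and τ_m(v_{−m}) = −m(β+m)·v_0. Then there is no ℂ-linear bijection f : S → V such that f ∘ σ_m = τ_m ∘ f for all m ∈ ℤ. (That is, the representation (ρ, S) given by negative left multiplication is not isomorphic to V^β as 𝒲-representations.) -/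
/-- If some column of `φ` vanishes identically, (E1)+(E2) are contradictory. -/
lemma phi_no_zero_column (φ : ℤ × ℤ → ℂ)
    (hE1 : ∀ m n : ℤ, φ (m, n) - φ (n, m) = (n : ℂ) - m)
    (hE2 : ∀ m n l : ℤ, ((n : ℂ) - m) * φ (m + n, l)
        = φ (m, l) * φ (n, m + l) - φ (n, l) * φ (m, n + l))
    (s : ℤ) (hcol : ∀ m : ℤ, φ (m, s) = 0) : False := by
  -- the row at s
  have row : ∀ l : ℤ, φ (s, l) = (l : ℂ) - s := by
    intro l
    linear_combination hE1 s l + hcol l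
  -- key quadratic relation from E2 with n = 0
  have star : ∀ m l : ℤ, φ (m, l) * (φ (0, l) - φ (0, m + l) - m) = 0 := by
    intro m l
    have h := hE2 m 0 l
    simp only [add_zero, zero_add] at h
    push_cast at h
    linear_combination h
  rcases eq_or_ne s 0 with rfl | hs
  · -- s = 0 : φ(0,l) = l, so star forces φ(m,l)=0 for m ≠ 0
    have h12 : φ (1, 2) = 0 := by
      have h := star 1 2
      rw [row 2, row (1 + 2)] at h
      push_cast at h
      rcases mul_eq_zero.mp h with h' | h'
      · exact h'
      · exfalso; norm_num at h'
    have h21 : φ (2, 1) = 0 := by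
      have h := star 2 1
      rw [row 1, row (2 + 1)] at h
      push_cast at h
      rcases mul_eq_zero.mp h with h' | h'
      · exact h'
      · exfalso; norm_num at h'
    have := hE1 1 2
    rw [h12, h21] at this
    norm_num at this
  · -- s ≠ 0
    have hsc : (s : ℂ) ≠ 0 := by exact_mod_cast hs
    have rel2 : ∀ l : ℤ, l ≠ s → φ (0, s + l) = φ (0, l) - s := by
      intro l hl
      have h := star s l
      rw [row l] at h
      have hne : (l : ℂ) - s ≠ 0 := sub_ne_zero.mpr (by exact_mod_cast hl)
      have h' := (mul_eq_zero.mp h).resolve_left hne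
      linear_combination -h'
    have g0 : φ (0, 0) = (s : ℂ) := by
      have h := rel2 0 (Ne.symm hs)
      rw [add_zero] at h
      rw [hcol 0] at h
      linear_combination -h
    have C1 : ∀ m : ℤ, (φ (0, m) - m) * ((s : ℂ) - φ (0, m) - m) = 0 := by
      intro m
      have hm0 : φ (m, 0) = φ (0, m) - m := by linear_combination hE1 m 0
      have h := star m 0
      rw [add_zero, hm0, g0] at h
      linear_combination h
    have gval : ∀ m : ℤ, φ (0, m) = (s : ℂ) - m := by
      intro m
      rcases mul_eq_zero.mp (C1 m) with h | h
      · have hgm : φ (0, m) = (m : ℂ) := by linear_combination h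
        rcases eq_or_ne m s with rfl | hms
        · rw [hcol 0]; ring
        · have h2 := rel2 m hms
          have h3 := C1 (s + m)
          rw [h2, hgm] at h3
          push_cast at h3
          have hs2m : (s : ℂ) = 2 * m := by
            rcases mul_eq_zero.mp h3 with h4 | h4
            · exfalso; apply hsc; linear_combination -h4 / 2
            · linear_combination h4
          rw [hgm]; linear_combination -hs2m
      · linear_combination -h
    have formula : ∀ m n : ℤ, m ≠ n → φ (m, n) = (s : ℂ) - 2 * m - n := by
      intro m n hmn
      have hm0 : φ (m, 0) = (s : ℂ) - 2 * m := by
        linear_combination gval m + hE1 m 0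
      have hn0 : φ (n, 0) = (s : ℂ) - 2 * n := by
        linear_combination gval n + hE1 n 0
      have hmn0 : φ (m + n, 0) = (s : ℂ) - 2 * (m + n) := by
        have := gval (m + n)
        have e := hE1 (m + n) 0
        push_cast at this e ⊢
        linear_combination this + e
      have hb : φ (n, m) = φ (m, n) - ((n : ℂ) - m) := by
        linear_combination -hE1 m n
      have h := hE2 m n 0
      simp only [add_zero] at h
      rw [hmn0, hm0, hn0, hb] at h
      have hne : (n : ℂ) - m ≠ 0 := sub_ne_zero.mpr (by exact_mod_cast hmn.symm)
      have key : ((n : ℂ) - m) * (φ (m, n) - ((s : ℂ) - 2 * m - n)) = 0 := by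
        linear_combination -h / 2
      have := (mul_eq_zero.mp key).resolve_left hne
      linear_combination this
    have e1 : (s : ℂ) = -1 := by
      have h := formula (s + 1) s (by omega)
      rw [hcol (s + 1)] at h
      push_cast at h
      linear_combination h / 2
    have e2 : (s : ℂ) = -2 := by
      have h := formula (s + 2) s (by omega)
      rw [hcol (s + 2)] at h
      push_cast at h
      linear_combination h / 2
    rw [e1] at e2
    norm_num at e2

theorem stmt_12 (φ : ℤ × ℤ → ℂ)
    (hE1 : ∀ m n : ℤ, φ (m, n) - φ (n, m) = (n : ℂ) - m)
    (hE2 : ∀ m n l : ℤ, ((n : ℂ) - m) * φ (m + n, l)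
        = φ (m, l) * φ (n, m + l) - φ (n, l) * φ (m, n + l))
    (β : ℂ)
    (σ τ : ℤ → ((ℤ →₀ ℂ) →ₗ[ℂ] (ℤ →₀ ℂ)))
    (hσ : ∀ m n : ℤ, σ m (W n) = (-φ (m, n)) • W (m + n))
    (hτ : ∀ m i : ℤ, m + i ≠ 0 → τ m (W i) = (i : ℂ) • W (m + i))
    (hτ0 : ∀ m : ℤ, τ m (W (-m)) = (-(m : ℂ) * (β + m)) • W 0) :
    ¬ ∃ f : (ℤ →₀ ℂ) ≃ₗ[ℂ] (ℤ →₀ ℂ),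
      ∀ (m : ℤ) (x : ℤ →₀ ℂ), f (σ m x) = τ m (f x) := by
  rintro ⟨f, hf⟩
  -- W 0 is killed by every τ m
  have hτW0 : ∀ m : ℤ, τ m (W 0) = 0 := by
    intro m
    rcases eq_or_ne m 0 with rfl | hm
    · simpa using hτ0 0
    · have := hτ m 0 (by simpa using hm)
      simpa using this
  set u := f.symm (W 0) with hu
  have hσu : ∀ m : ℤ, σ m u = 0 := by
    intro m
    have h1 : f (σ m u) = 0 := by
      rw [hf m u, hu, f.apply_symm_apply, hτW0]
    exact (map_eq_zero_iff f f.injective).mp h1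
  have hune : u ≠ 0 := by
    intro h
    have h2 : f u = W 0 := f.apply_symm_apply _
    rw [h, map_zero] at h2
    have : (Finsupp.single (0:ℤ) (1:ℂ)) ≠ 0 := fun h => one_ne_zero (Finsupp.single_eq_zero.mp h)
    exact this (by simpa [W] using h2.symm)
  obtain ⟨s, hsmem⟩ := Finsupp.support_nonempty_iff.mpr hune
  have hus : u s ≠ 0 := Finsupp.mem_support_iff.mp hsmem
  -- extract coefficients: φ (m, s) = 0 for all m
  have hcol : ∀ m : ℤ, φ (m, s) = 0 := by
    intro m
    have hrep : σ m u = u.sum fun n c => (c * -φ (m, n)) • W (m + n) := by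
      conv_lhs => rw [← Finsupp.sum_single u]
      rw [map_finsuppSum]
      apply Finsupp.sum_congr
      intro n _
      have : Finsupp.single n (u n) = (u n) • W n := by
        rw [W, Finsupp.smul_single', mul_one]
      rw [this, map_smul, hσ m n, smul_smul]
    have hval : (σ m u) (m + s) = u s * -φ (m, s) := by
      rw [hrep]
      rw [Finsupp.sum_apply]
      rw [Finsupp.sum]
      rw [Finset.sum_eq_single s]
      · simp [W, Finsupp.single_apply]
      · intro n _ hns
        simp [W, Finsupp.single_apply, hns]
      · intro hns
        exact absurd hsmem hns
    rw [hσu m] at hval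
    simp only [Finsupp.zero_apply] at hval
    rcases mul_eq_zero.mp hval.symm with h | h
    · exact absurd h hus
    · exact neg_eq_zero.mp h
  exact phi_no_zero_column φ hE1 hE2 s hcol
end

section
/- Let φ : ℤ × ℤ → ℂ satisfy (E1) and (E2). For each m ∈ ℤ let σ_m be the ℂ-linear endomorphism of S = ℤ →₀ ℂ determined on the standard basis {W_n} by σ_m(W_n) = −φ(m,n)·W_{m+n}. Let α, β ∈ ℂ with 0 ≤ Re α < 1 and β ≠ 2, and for each m ∈ ℤ let τ_m be the ℂ-linear endomorphism of V = ℤ →₀ ℂ determined on the standard basis {v_i} by τ_m(v_i) = (α + i + mβ)·v_{m+i}. Then there is no ℂ-linear bijection f : S → V such that f ∘ σ_m = τ_m ∘ f for all m ∈ ℤ. (That is, the representation (ρ, S) given by negative left multiplication is not isomorphic to V_{α,β} as 𝒲-representations when β ≠ 2.) -/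
lemma diag_apply (x : ℤ →₀ ℂ) (S : (ℤ →₀ ℂ) →ₗ[ℂ] (ℤ →₀ ℂ)) (g : ℤ → ℂ)
    (hS : ∀ i, S (W i) = g i • W i) (j : ℤ) : (S x) j = g j * x j := by
  have h1 : S x = x.sum fun i a => Finsupp.single i (a * g i) := by
    conv_lhs => rw [← Finsupp.sum_single x]
    rw [map_finsuppSum]
    refine Finsupp.sum_congr fun i _ => ?_
    have h2 : (Finsupp.single i (x i) : ℤ →₀ ℂ) = (x i) • W i := by
      rw [W, Finsupp.smul_single, smul_eq_mul, mul_one]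
    rw [h2, map_smul, hS, W, Finsupp.smul_single, Finsupp.smul_single,
      smul_eq_mul, smul_eq_mul, mul_one, mul_comm]
  rw [h1, Finsupp.sum_apply]
  simp only [Finsupp.single_apply]
  rw [Finsupp.sum_ite_eq']
  split
  · ring
  · next h => rw [Finsupp.notMem_support_iff.mp h, mul_zero]

lemma eigen (x : ℤ →₀ ℂ) (S : (ℤ →₀ ℂ) →ₗ[ℂ] (ℤ →₀ ℂ)) (g : ℤ → ℂ)
    (hS : ∀ i, S (W i) = g i • W i) (hg : Function.Injective g)
    (lam : ℂ) (hx : S x = lam • x) (hx0 : x ≠ 0) :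
    ∃ k c, c ≠ 0 ∧ x = Finsupp.single k c := by
  have hev : ∀ j, g j * x j = lam * x j := by
    intro j
    rw [← diag_apply x S g hS, hx]; rfl
  obtain ⟨k, hk⟩ := Finsupp.ne_iff.mp hx0
  rw [Finsupp.coe_zero, Pi.zero_apply] at hk
  refine ⟨k, x k, hk, ?_⟩
  ext j
  rw [Finsupp.single_apply]
  split
  · next h => rw [h]
  · next h =>
    by_contra hj
    have h1 : g j = lam := by
      have := hev j
      field_simp at this
      tauto
    have h2 : g k = lam := by
      have := hev k
      field_simp at this
      tauto
    exact h (hg (h1.trans h2.symm)).symm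


theorem stmt_13 (φ : ℤ × ℤ → ℂ)
    (hE1 : ∀ m n : ℤ, φ (m, n) - φ (n, m) = (n : ℂ) - m)
    (hE2 : ∀ m n l : ℤ, ((n : ℂ) - m) * φ (m + n, l)
        = φ (m, l) * φ (n, m + l) - φ (n, l) * φ (m, n + l))
    (α β : ℂ) (hα0 : 0 ≤ α.re) (hα1 : α.re < 1) (hβ : β ≠ 2)
    (σ τ : ℤ → ((ℤ →₀ ℂ) →ₗ[ℂ] (ℤ →₀ ℂ)))
    (hσ : ∀ m n : ℤ, σ m (W n) = (-φ (m, n)) • W (m + n))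
    (hτ : ∀ m i : ℤ, τ m (W i) = (α + i + m * β) • W (m + i)) :
    ¬ ∃ f : (ℤ →₀ ℂ) ≃ₗ[ℂ] (ℤ →₀ ℂ),
      ∀ (m : ℤ) (x : ℤ →₀ ℂ), f (σ m x) = τ m (f x) := by
  rintro ⟨f, hf⟩
  -- τ 0 acts diagonally
  have hτ0 : ∀ i : ℤ, τ 0 (W i) = (α + i) • W i := by
    intro i
    have := hτ 0 i
    simpa using this
  have hginj : Function.Injective (fun i : ℤ => α + (i : ℂ)) := by
    intro i j h
    simp only [add_right_inj, Int.cast_inj] at h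
    exact h
  have hWne : ∀ n : ℤ, W n ≠ 0 := by
    intro n
    simp only [W, ne_eq, Finsupp.single_eq_zero, one_ne_zero, not_false_eq_true]
  -- each f (W n) is a nonzero multiple of a single basis vector
  have key : ∀ n : ℤ, ∃ k c, c ≠ 0 ∧ f (W n) = Finsupp.single k c := by
    intro n
    have h1 : τ 0 (f (W n)) = (-φ (0, n)) • f (W n) := by
      rw [← hf 0 (W n), hσ 0 n, map_smul, zero_add]
    exact eigen (f (W n)) (τ 0) (fun i => α + i) hτ0 hginj _ h1
      (by simp only [ne_eq, LinearEquiv.map_eq_zero_iff]; exact hWne n)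
  choose p c hc0 hfc using key
  set q : ℤ → ℂ := fun n => α + (p n : ℂ) with hq
  -- injectivity of q
  have hqinj : Function.Injective q := by
    intro n n' h
    have hp : p n = p n' := by
      have := hginj h
      exact this
    by_contra hne
    have h1 : f ((c n') • W n) = (c n * c n') • W (p n) := by
      rw [map_smul, hfc n, W, Finsupp.smul_single, Finsupp.smul_single]
      rw [smul_eq_mul, smul_eq_mul, mul_one, mul_comm]
    have h2 : f ((c n) • W n') = (c n * c n') • W (p n) := by
      rw [map_smul, hfc n', hp, W, Finsupp.smul_single, Finsupp.smul_single]
      rw [smul_eq_mul, smul_eq_mul, mul_one]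
    have h3 : (c n') • W n = (c n) • W n' := f.injective (h1.trans h2.symm)
    rw [W, W, Finsupp.smul_single, Finsupp.smul_single] at h3
    rcases Finsupp.single_eq_single_iff _ _ _ _ |>.mp h3 with ⟨h4, _⟩ | ⟨h4, _⟩
    · exact hne h4
    · exact hc0 n' (by simpa using h4)
  -- R1
  have R1 : ∀ m n : ℤ, φ (m, n) * c (m + n) = -(c n * (q n + m * β)) := by
    intro m n
    have h1 := hf m (W n)
    rw [hσ m n, map_smul, hfc (m + n), hfc n] at h1
    have h2 : (Finsupp.single (p n) (c n) : ℤ →₀ ℂ) = (c n) • W (p n) := by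
      rw [W, Finsupp.smul_single, smul_eq_mul, mul_one]
    rw [h2, map_smul, hτ m (p n)] at h1
    simp only [W, Finsupp.smul_single, smul_eq_mul, smul_smul, mul_one] at h1
    rcases Finsupp.single_eq_single_iff _ _ _ _ |>.mp h1 with ⟨_, h4⟩ | ⟨h4, h5⟩
    · rw [hq]; push_cast; linear_combination -h4
    · rw [hq]; push_cast; linear_combination -h4 + h5
  -- express φ by division
  have hphi : ∀ m n : ℤ, φ (m, n) = -(c n * (q n + m * β)) / c (m + n) := by
    intro m n
    rw [eq_div_iff (hc0 (m + n))]
    exact R1 m n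
  -- E2 in terms of q
  have E2' : ∀ m n l : ℤ, -(((n:ℂ) - m)) * (q l + ((m:ℂ) + n) * β)
      = (q l + m * β) * (q (m + l) + n * β) - (q l + n * β) * (q (n + l) + m * β) := by
    intro m n l
    have h := hE2 m n l
    rw [hphi (m + n) l, hphi m l, hphi n (m + l), hphi n l, hphi m (n + l)] at h
    rw [show n + (m + l) = m + n + l from by ring, show m + (n + l) = m + n + l from by ring] at h
    have hcT := hc0 (m + n + l)
    have hcL := hc0 l
    have hcM := hc0 (m + l)
    have hcN := hc0 (n + l)
    field_simp at h
    apply mul_right_cancel₀ (mul_ne_zero (mul_ne_zero (mul_ne_zero hcL hcM) hcN) (mul_ne_zero hcT hcT))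
    push_cast at h
    linear_combination (c l * c (m + l) * c (n + l) * (c (m + n + l) * c (m + n + l))) * h
  -- consequence at n = 0
  have hC : ∀ m l : ℤ, (q l + m * β) * (q (m + l) - q l - m) = 0 := by
    intro m l
    have h := E2' m 0 l
    rw [show (0:ℤ) + l = l from by ring] at h
    push_cast at h
    linear_combination -h
  -- q is additive-linear
  have hadd : ∀ m l : ℤ, q (m + l) = q l + m := by
    intro m l
    by_contra hne
    have hm0 : m ≠ 0 := by
      rintro rfl
      rw [zero_add] at hne
      exact hne (by push_cast; ring)
    have h1 : q l + m * β = 0 := by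
      rcases mul_eq_zero.mp (hC m l) with h | h
      · exact h
      · exact absurd (by linear_combination h) hne
    have h2 : q (m + l) - m * β = 0 := by
      have h := hC (-m) (m + l)
      rw [show -m + (m + l) = l from by ring] at h
      push_cast at h
      rcases mul_eq_zero.mp h with h | h
      · linear_combination h
      · exact absurd (by linear_combination -h) hne
    by_cases hb0 : β = 0
    · have hq2 : q (m + l) = q l := by rw [hb0] at h1 h2; linear_combination h2 - h1
      have := hqinj hq2
      omega
    · have hmC : (m:ℂ) ≠ 0 := Int.cast_ne_zero.mpr hm0
      have h3 : q (2*m + l) - q l - 2*(m:ℂ) = 0 := by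
        have h := hC (2*m) l
        push_cast at h
        rcases mul_eq_zero.mp h with h | h
        · exact absurd (by linear_combination h - h1) (mul_ne_zero hmC hb0)
        · linear_combination h
      have h4 : q (2*m + l) - q (m + l) - (m:ℂ) = 0 := by
        have h := hC m (m + l)
        rw [show m + (m + l) = 2*m + l from by ring] at h
        rcases mul_eq_zero.mp h with h | h
        · exact absurd (by linear_combination (h - h2)/2) (mul_ne_zero hmC hb0)
        · linear_combination h
      exact hne (by linear_combination h3 - h4)
  have hlin : ∀ k : ℤ, q k = q 0 + (k:ℂ) := by
    intro k
    have := hadd k 0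
    rw [add_zero] at this
    exact this
  -- the master scalar equation
  have Estar : ∀ m n : ℤ, c m * (q m + n * β) - c n * (q n + m * β) = ((n:ℂ) - m) * c (m + n) := by
    intro m n
    have r1 := R1 m n
    have r2 := R1 n m
    rw [show n + m = m + n from by ring] at r2
    linear_combination (c (m + n)) * hE1 m n - r1 + r2
  have hA : ∀ m : ℤ, c m * (q 0 + 2*(m:ℂ)) = c 0 * (q 0 + (m:ℂ)*β) := by
    intro m
    have h := Estar m 0
    rw [add_zero] at h
    have hm := hlin m
    push_cast at h
    linear_combination h - c m * hm
  set a := q 0 with ha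
  have h2 := hA 1
  have h3 := hA (-1)
  have h5 := hA 2
  have h6 := hA 3
  push_cast at h2 h3 h5 h6
  have h1 := Estar 1 (-1)
  rw [show (1:ℤ) + (-1) = 0 from by ring, hlin 1, hlin (-1)] at h1
  push_cast at h1
  have h4 := Estar 1 2
  rw [show (1:ℤ) + 2 = 3 from by ring, hlin 1, hlin 2] at h4
  push_cast at h4
  have hb : (β - 2) * (β + 1) * c 0 = 0 := by
    linear_combination ((a+2)*(a-2)/4) * h1 - ((a+1-β)*(a-2)/4) * h2 + ((a-1+β)*(a+2)/4) * h3
  have hb2 : β = -1 := by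
    rcases mul_eq_zero.mp hb with h | h
    · rcases mul_eq_zero.mp h with h | h
      · exact absurd (by linear_combination h) hβ
      · linear_combination h
    · exact absurd h (hc0 0)
  subst hb2
  have hc00 : c 0 = 0 := by
    linear_combination ((a+2)*(a+4)*(a+6)/72) * h4 - ((a-1)*(a+4)*(a+6)/72) * h2
      + ((a+1)*(a+2)*(a+6)/72) * h5 + ((a+2)*(a+4)/72) * h6
  exact hc0 0 hc00
end

section
/- Let φ : ℤ × ℤ → ℂ satisfy (E1) and (E2). Then there exists γ ∈ ℂ such that φ(n,m) = −(γ + m + 2n) for all m,n ∈ ℤ. (Equivalently: every graded anti-pre-Lie algebraic structure on the Witt algebra is of the form W_n ∘ W_m = −(γ + m + 2n)W_{m+n} for some γ ∈ ℂ.) -/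
theorem stmt_14 (φ : ℤ × ℤ → ℂ)
    (hE1 : ∀ m n : ℤ, φ (m, n) - φ (n, m) = (n : ℂ) - m)
    (hE2 : ∀ m n l : ℤ, ((n : ℂ) - m) * φ (m + n, l)
        = φ (m, l) * φ (n, m + l) - φ (n, l) * φ (m, n + l)) :
    ∃ γ : ℂ, ∀ m n : ℤ, φ (n, m) = -(γ + m + 2 * n) := by
  -- (*) : column relation
  have star : ∀ n l : ℤ, φ (n, l) * (φ (0, l) - φ (0, n + l) - n) = 0 := by
    intro n l
    have h := hE2 0 n l
    simp only [zero_add, add_zero, Int.cast_zero, sub_zero] at h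
    linear_combination -h
  -- dichotomy for φ(0,n)
  have dich : ∀ n : ℤ, (φ (0, n) - n) * (φ (0, 0) - φ (0, n) - n) = 0 := by
    intro n
    have h := star n 0
    have h1 := hE1 n 0
    simp only [add_zero, Int.cast_zero, sub_zero, zero_sub] at h h1
    have hn0 : φ (n, 0) = φ (0, n) - n := by linear_combination h1
    rw [hn0] at h
    linear_combination h
  -- Lemma A
  have lemA : ∀ n : ℤ, φ (0, n) = φ (0, 0) - n := by
    intro n
    by_cases h : φ (0, n) = φ (0, 0) - n
    · exact h
    exfalso
    have hval : φ (0, n) = n := by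
      rcases mul_eq_zero.1 (dich n) with h1 | h1
      · linear_combination h1
      · exfalso; exact h (by linear_combination -h1)
    have hn0 : n ≠ 0 := by
      rintro rfl
      apply h
      rw [hval]
      push_cast
      ring
    have hc2 : φ (0, 0) ≠ 2 * (n : ℂ) := by
      intro hcc
      exact h (by rw [hval, hcc]; ring)
    have row : ∀ k : ℤ, k ≠ 0 → φ (k, n) = 0 := by
      intro k hk
      by_contra hφ
      have h1 := star k n
      rcases mul_eq_zero.1 h1 with h2 | h2
      · exact hφ h2
      have h3 : φ (0, k + n) = (n : ℂ) - k := by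
        rw [hval] at h2; linear_combination -h2
      rcases mul_eq_zero.1 (dich (k + n)) with h4 | h4
      · rw [h3] at h4
        push_cast at h4
        have : (k : ℂ) = 0 := by linear_combination -h4 / 2
        exact hk (by exact_mod_cast this)
      · rw [h3] at h4
        push_cast at h4
        exact hc2 (by linear_combination h4)
    have h2 := hE2 (-1) 1 n
    norm_num at h2
    rw [row 1 one_ne_zero, row (-1) (by norm_num)] at h2
    have h4 : φ (0, n) = 0 := by linear_combination h2 / 2
    rw [hval] at h4
    exact hn0 (by exact_mod_cast h4)
  -- Lemma B : off-diagonal values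
  have lemB : ∀ n m : ℤ, n ≠ m → φ (n, m) = φ (0, 0) - m - 2 * n := by
    intro n m hnm
    have h := hE2 m n 0
    have h1 := hE1 m n
    have ha := lemA m
    have hb := lemA n
    have hab := lemA (m + n)
    have hm0 : φ (m, 0) = φ (0, m) - m := by linear_combination hE1 m 0
    have hn0 : φ (n, 0) = φ (0, n) - n := by linear_combination hE1 n 0
    have hmn0 : φ (m + n, 0) = φ (0, m + n) - (m + n) := by
      have := hE1 (m + n) 0
      push_cast at this ⊢
      linear_combination this
    simp only [add_zero] at h
    rw [hm0, hn0, hmn0, ha, hb, hab] at h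
    have hm' : φ (m, n) = φ (n, m) + ((n : ℂ) - m) := by linear_combination h1
    rw [hm'] at h
    have hne : (n : ℂ) - m ≠ 0 := by
      rw [sub_ne_zero]
      exact_mod_cast hnm
    have key : ((n : ℂ) - m) * (φ (n, m) - (φ (0, 0) - m - 2 * n)) = 0 := by
      push_cast at h ⊢
      linear_combination -h / 2
    rcases mul_eq_zero.1 key with h2 | h2
    · exact absurd h2 hne
    · linear_combination h2
  -- key identity for the diagonal
  have key2 : ∀ m n : ℤ, m ≠ 0 → m ≠ n → 2 * m ≠ n →
      (φ (0, 0) - n - m) * (φ (n, n) - (φ (0, 0) - 3 * n)) = 0 := by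
    intro m n hm0 hmn h2mn
    have h := hE2 m n (n - m)
    have e1 : φ (m + n, n - m) = φ (0, 0) - (n - m) - 2 * (m + n) := by
      have := lemB (m + n) (n - m) (by omega)
      push_cast at this ⊢
      linear_combination this
    have e2 : φ (m, n - m) = φ (0, 0) - (n - m) - 2 * m := by
      have := lemB m (n - m) (by omega)
      push_cast at this ⊢
      linear_combination this
    have e3 : φ (n, n - m) = φ (0, 0) - (n - m) - 2 * n := by
      have := lemB n (n - m) (by omega)
      push_cast at this ⊢
      linear_combination this
    have e4 : φ (m, n + (n - m)) = φ (0, 0) - (n + (n - m)) - 2 * m := by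
      have := lemB m (n + (n - m)) (by omega)
      push_cast at this ⊢
      linear_combination this
    have e5 : φ (n, m + (n - m)) = φ (n, n) := by norm_num
    rw [e1, e2, e3, e4, e5] at h
    linear_combination -h
  -- Lemma C : diagonal
  have lemC : ∀ n : ℤ, φ (n, n) = φ (0, 0) - 3 * n := by
    intro n
    by_cases hd : φ (n, n) = φ (0, 0) - 3 * n
    · exact hd
    exfalso
    have g : ∀ m : ℤ, m ≠ 0 → m ≠ n → 2 * m ≠ n → (φ (0, 0) : ℂ) - n - m = 0 := by
      intro m a b cc
      rcases mul_eq_zero.1 (key2 m n a b cc) with h1 | h1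
      · exact h1
      · exact absurd (by linear_combination h1) hd
    have g1 := g ((n.natAbs : ℤ) + 1) (by omega) (by omega) (by omega)
    have g2 := g ((n.natAbs : ℤ) + 2) (by omega) (by omega) (by omega)
    have : ((n.natAbs : ℤ) : ℂ) + 1 = ((n.natAbs : ℤ) : ℂ) + 2 := by
      push_cast at g1 g2 ⊢
      linear_combination g2 - g1
    norm_num at this
  -- conclusion
  refine ⟨-φ (0, 0), fun m n => ?_⟩
  by_cases h : n = m
  · subst h
    rw [lemC n]
    ring
  · rw [lemB n m h]
    ring
end

section
/- Let γ ∈ ℂ, let S = ℤ →₀ ℂ with standard basis {W_m | m ∈ ℤ}, and let ∘ be the ℂ-bilinear operation on S determined by W_n ∘ W_m = −(γ + m + 2n)·W_{m+n}. Then (S, ∘) is an admissible Novikov algebra: for all x, y, z ∈ S, (x∘y)∘z − (x∘z)∘y = 2·x∘(y∘z − z∘y), and x∘(y∘z) − y∘(x∘z) = (y∘x − x∘y)∘z. -/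
theorem stmt_18 (γ : ℂ)
    (mul : (ℤ →₀ ℂ) →ₗ[ℂ] (ℤ →₀ ℂ) →ₗ[ℂ] (ℤ →₀ ℂ))
    (h : ∀ n m : ℤ, mul (W n) (W m) = (-(γ + (m : ℂ) + 2 * n)) • W (m + n)) :
    (∀ x y z : ℤ →₀ ℂ,
      mul (mul x y) z - mul (mul x z) y = (2 : ℂ) • mul x (mul y z - mul z y)) ∧
    (∀ x y z : ℤ →₀ ℂ,
      mul x (mul y z) - mul y (mul x z) = mul (mul y x - mul x y) z) := by
  have hs : ∀ (a : ℤ) (b : ℂ), Finsupp.single a b = b • W a := by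
    intro a b
    rw [W, Finsupp.smul_single, smul_eq_mul, mul_one]
  have key1 : ∀ n m k : ℤ, mul (mul (W n) (W m)) (W k) - mul (mul (W n) (W k)) (W m)
      = (2 : ℂ) • mul (W n) (mul (W m) (W k)) - (2 : ℂ) • mul (W n) (mul (W k) (W m)) := by
    intro n m k
    simp only [h, map_smul, LinearMap.smul_apply, smul_smul]
    rw [show k + (m + n) = (k + m) + n from by ring, show m + (k + n) = (k + m) + n from by ring,
      show m + k = k + m from by ring]
    rw [← sub_smul, ← sub_smul]
    congr 1
    push_cast
    ring
  have key2 : ∀ n m k : ℤ, mul (W n) (mul (W m) (W k)) - mul (W m) (mul (W n) (W k))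
      = mul (mul (W m) (W n)) (W k) - mul (mul (W n) (W m)) (W k) := by
    intro n m k
    simp only [h, map_smul, LinearMap.smul_apply, smul_smul]
    rw [show k + n + m = k + m + n from by ring, show k + (n + m) = k + m + n from by ring,
      show k + (m + n) = k + m + n from by ring]
    rw [← sub_smul, ← sub_smul]
    congr 1
    push_cast
    ring
  constructor
  · intro x y z
    induction x using Finsupp.induction_linear with
    | zero => simp
    | add a b ha hb =>
        simp only [map_add, LinearMap.add_apply, map_sub, LinearMap.sub_apply, smul_sub, smul_add] at ha hb ⊢
        linear_combination (norm := module) ha + hb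
    | single a c =>
        induction y using Finsupp.induction_linear with
        | zero => simp
        | add a' b' ha hb =>
            simp only [map_add, LinearMap.add_apply, map_sub, LinearMap.sub_apply, smul_sub, smul_add] at ha hb ⊢
            linear_combination (norm := module) ha + hb
        | single a' c' =>
            induction z using Finsupp.induction_linear with
            | zero => simp
            | add a'' b'' ha hb =>
                simp only [map_add, LinearMap.add_apply, map_sub, LinearMap.sub_apply, smul_sub, smul_add] at ha hb ⊢
                linear_combination (norm := module) ha + hb
            | single a'' c'' =>
                simp only [hs, map_smul, LinearMap.smul_apply, map_sub, LinearMap.sub_apply,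
                  smul_sub]
                linear_combination (norm := module) (c * c' * c'') • key1 a a' a''
  · intro x y z
    induction x using Finsupp.induction_linear with
    | zero => simp
    | add a b ha hb =>
        simp only [map_add, LinearMap.add_apply, map_sub, LinearMap.sub_apply, smul_sub, smul_add] at ha hb ⊢
        linear_combination (norm := module) ha + hb
    | single a c =>
        induction y using Finsupp.induction_linear with
        | zero => simp
        | add a' b' ha hb =>
            simp only [map_add, LinearMap.add_apply, map_sub, LinearMap.sub_apply, smul_sub, smul_add] at ha hb ⊢
            linear_combination (norm := module) ha + hb
        | single a' c' =>
            induction z using Finsupp.induction_linear with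
            | zero => simp
            | add a'' b'' ha hb =>
                simp only [map_add, LinearMap.add_apply, map_sub, LinearMap.sub_apply, smul_sub, smul_add] at ha hb ⊢
                linear_combination (norm := module) ha + hb
            | single a'' c'' =>
                simp only [hs, map_smul, LinearMap.smul_apply, map_sub, LinearMap.sub_apply,
                  smul_sub]
                linear_combination (norm := module) (c * c' * c'') • key2 a a' a''
end

section
/- There do not exist γ ∈ ℂ and a function ψ : ℤ → ℂ such that both ψ(m) − ψ(−m) = (m³ − m)/12 for all m ∈ ℤ, and (γ + m − n)·ψ(n) − (γ + n − m)·ψ(m) = (m − n)·ψ(m+n) for all m,n ∈ ℤ. (Here ψ(m) plays the role of φ(m,−m), the coefficient of the central element c in W_m ∘ W_{−m}; this is the key nonexistence underlying the fact that there is no graded anti-pre-Lie algebraic structure on the Virasoro algebra.) -/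
theorem stmt_19 :
    ¬ ∃ (γ : ℂ) (ψ : ℤ → ℂ),
      (∀ m : ℤ, ψ m - ψ (-m) = ((m : ℂ) ^ 3 - m) / 12) ∧
      (∀ m n : ℤ, (γ + m - n) * ψ n - (γ + n - m) * ψ m = ((m : ℂ) - n) * ψ (m + n)) := by
  rintro ⟨γ, ψ, h1, h2⟩
  have e1 := h1 1
  have e2 := h1 2
  have e3 := h1 3
  have a1 := h2 1 0
  have a1' := h2 (-1) 0
  have a2 := h2 2 0
  have a2' := h2 (-2) 0
  have b1 := h2 2 1
  have b3 := h2 (-2) (-1)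
  norm_num at e1 e2 e3 a1 a1' a2 a2' b1 b3
  have hψ0 : ψ 0 = 0 := by linear_combination (a1 - a1' + γ * e1) / 2
  have hγ : γ = 0 := by linear_combination -2 * (a2 - a2' + γ * e2) + 8 * hψ0
  have hbad : (0 : ℂ) = 3 / 2 := by
    linear_combination e3 - e2 + b1 + b3 - (ψ 1 + ψ (-1) - ψ 2 - ψ (-2)) * hγ - e1
  norm_num at hbad
end
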